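/- arXiv:math-ph/0406038 — 4 statements merged into one kernel-verified Lean document; each statement's English description precedes it below -/
import Mathlib

section
/- Define Z(L,s) for nonnegative integers L, s by: Z(L,s) is the sum of q^(α_1 + α_3 + ⋯ + α_{2n-1}) over all strictly increasing integer sequences 0 ≤ α_1 < α_2 < ⋯ < α_{2n} ≤ L such that ∑_{k=1}^n (α_{2k}-α_{2k-1}) = s (here n ranges over all nonnegative integers; for n = 0 the empty sequence contributes 1 when s = 0). Then Z(L,s) satisfies the recursion Z(L,s) = Z(L-1,s) + ∑_{k=1}^s q^(L-k) · Z(L-k-1, s-k) for L ≥ 1 and s ≥ 1. -/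
attribute [local instance] Classical.propDecidable

/-- The formal variable `q`. -/
noncomputable def q : RatFunc ℚ := RatFunc.X

/-- The Gaussian (q-)binomial coefficient `[n choose m]_q`. -/
noncomputable def qb (n m : ℤ) : RatFunc ℚ :=
  if 0 ≤ m ∧ m ≤ n then
    (∏ k ∈ Finset.Icc (1 : ℤ) n, (1 - q ^ k)) /
      ((∏ k ∈ Finset.Icc (1 : ℤ) m, (1 - q ^ k)) *
        (∏ k ∈ Finset.Icc (1 : ℤ) (n - m), (1 - q ^ k)))
  else 0

/-- The index `2k` (0-based), i.e. the odd-numbered entry `α_{2k+1}` in 1-based numbering. -/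
def evenIdx {n : ℕ} (k : Fin n) : Fin (2 * n) := ⟨2 * k, by have := k.isLt; omega⟩

/-- The index `2k+1` (0-based), i.e. the even-numbered entry `α_{2k+2}` in 1-based numbering. -/
def oddIdx {n : ℕ} (k : Fin n) : Fin (2 * n) := ⟨2 * k + 1, by have := k.isLt; omega⟩

/-- The number of balls `∑_{k=1}^n (α_{2k} - α_{2k-1})` of the state encoded by the
strictly increasing sequence `A = (α_1, …, α_{2n})` of wall positions in `{0,…,L}`. -/
def balls {L n : ℕ} (A : Fin (2 * n) → Fin (L + 1)) : ℕ :=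
  ∑ k : Fin n, ((A (oddIdx k) : ℕ) - (A (evenIdx k) : ℕ))

/-- The energy `α_1 + α_3 + ⋯ + α_{2n-1}` (sum of the odd-indexed entries). -/
def energy {L n : ℕ} (A : Fin (2 * n) → Fin (L + 1)) : ℕ :=
  ∑ k : Fin n, (A (evenIdx k) : ℕ)

/-- The partition function `Z(L,s)`: the sum of `q^(α_1+α_3+⋯+α_{2n-1})` over all strictly
increasing integer sequences `0 ≤ α_1 < ⋯ < α_{2n} ≤ L` with `∑_{k=1}^n (α_{2k}-α_{2k-1}) = s`
(`n` ranges over all nonnegative integers; a strictly increasing sequence in `{0,…,L}` has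
at most `L+1` terms, so `n < L+2` suffices; for `n = 0` the empty sequence contributes `1`
when `s = 0`). -/
noncomputable def Z (L s : ℕ) : RatFunc ℚ :=
  ∑ n ∈ Finset.range (L + 2),
    ∑ A ∈ Finset.univ.filter
        (fun A : Fin (2 * n) → Fin (L + 1) => StrictMono A ∧ balls A = s),
      q ^ energy A


/-! ### Auxiliary definitions for the proof -/

def balls' {M n : ℕ} (A : Fin (2 * n) → Fin M) : ℕ :=
  ∑ k : Fin n, ((A (oddIdx k) : ℕ) - (A (evenIdx k) : ℕ))

def energy' {M n : ℕ} (A : Fin (2 * n) → Fin M) : ℕ :=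
  ∑ k : Fin n, (A (evenIdx k) : ℕ)

noncomputable def g (M m t : ℕ) : RatFunc ℚ :=
  ∑ A ∈ Finset.univ.filter
      (fun A : Fin (2 * m) → Fin M => StrictMono A ∧ balls' A = t),
    q ^ energy' A

lemma val_congr_strictMono {n M M' : ℕ} {A : Fin n → Fin M} {B : Fin n → Fin M'}
    (h : ∀ i, (A i : ℕ) = (B i : ℕ)) (hA : StrictMono A) : StrictMono B := by
  intro i j hij
  have h2 := hA hij
  rw [Fin.lt_def] at h2 ⊢
  rw [← h i, ← h j]; exact h2

lemma val_congr_balls {m M M' : ℕ} {A : Fin (2 * m) → Fin M} {B : Fin (2 * m) → Fin M'}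
    (h : ∀ i, (A i : ℕ) = (B i : ℕ)) : balls' A = balls' B := by
  unfold balls'; exact Finset.sum_congr rfl fun j _ => by rw [h, h]

lemma val_congr_energy {m M M' : ℕ} {A : Fin (2 * m) → Fin M} {B : Fin (2 * m) → Fin M'}
    (h : ∀ i, (A i : ℕ) = (B i : ℕ)) : energy' A = energy' B := by
  unfold energy'; exact Finset.sum_congr rfl fun j _ => by rw [h]

def res {M m : ℕ} (A : Fin (2 * (m + 1)) → Fin M) : Fin (2 * m) → Fin M :=
  fun i => A (Fin.castLE (by omega) i)

lemma res_strictMono {M m : ℕ} {A : Fin (2 * (m + 1)) → Fin M} (hA : StrictMono A) :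
    StrictMono (res A) := by
  intro i j hij
  exact hA (by rw [Fin.lt_def] at hij ⊢; simpa using hij)

lemma split_balls {M m : ℕ} (A : Fin (2 * (m + 1)) → Fin M) :
    balls' A = balls' (res A) +
      ((A ⟨2 * m + 1, by omega⟩ : ℕ) - (A ⟨2 * m, by omega⟩ : ℕ)) := by
  unfold balls' res
  rw [Fin.sum_univ_castSucc]
  congr 1

lemma split_energy {M m : ℕ} (A : Fin (2 * (m + 1)) → Fin M) :
    energy' A = energy' (res A) + (A ⟨2 * m, by omega⟩ : ℕ) := by
  unfold energy' res
  rw [Fin.sum_univ_castSucc]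
  congr 1

lemma part1 (c m t : ℕ) (hc : 1 ≤ c) :
    ∑ A ∈ Finset.univ.filter
        (fun A : Fin (2 * m) → Fin (c + 1) =>
          (StrictMono A ∧ balls' A = t) ∧ ∀ i, (A i : ℕ) < c),
      q ^ energy' A = g c m t := by
  rw [g]
  refine Finset.sum_nbij'
    (i := fun (A : Fin (2 * m) → Fin (c + 1)) idx => (⟨min (A idx : ℕ) (c - 1), by omega⟩ : Fin c))
    (j := fun (B : Fin (2 * m) → Fin c) idx => Fin.castLE (by omega) (B idx))
    ?_ ?_ ?_ ?_ ?_
  · intro A hA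
    simp only [Finset.mem_filter, Finset.mem_univ, true_and] at hA ⊢
    obtain ⟨⟨hmono, hb⟩, hlt⟩ := hA
    have hv : ∀ idx, (A idx : ℕ) = ((⟨min (A idx : ℕ) (c - 1), by omega⟩ : Fin c) : ℕ) := by
      intro idx; have := hlt idx; simp; omega
    exact ⟨val_congr_strictMono hv hmono, (val_congr_balls hv).symm.trans hb⟩
  · intro B hB
    simp only [Finset.mem_filter, Finset.mem_univ, true_and] at hB ⊢
    obtain ⟨hmono, hb⟩ := hB
    have hv : ∀ idx, (B idx : ℕ) = ((Fin.castLE (by omega : c ≤ c + 1) (B idx)) : ℕ) := by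
      intro idx; simp
    refine ⟨⟨val_congr_strictMono hv hmono, (val_congr_balls hv).symm.trans hb⟩, ?_⟩
    intro idx; simpa using (B idx).isLt
  · intro A hA
    simp only [Finset.mem_filter, Finset.mem_univ, true_and] at hA
    funext idx
    apply Fin.ext
    have := hA.2 idx
    simp; omega
  · intro B hB
    funext idx
    apply Fin.ext
    have := (B idx).isLt
    simp; omega
  · intro A hA
    simp only [Finset.mem_filter, Finset.mem_univ, true_and] at hA
    congr 1
    apply val_congr_energy
    intro idx; have := hA.2 idx; simp; omega

def shr {m c : ℕ} (d : ℕ) (hd : 1 ≤ d) (A : Fin (2 * (m + 1)) → Fin (c + 1)) :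
    Fin (2 * m) → Fin d :=
  fun idx => ⟨min (A (Fin.castLE (by omega) idx) : ℕ) (d - 1), by omega⟩

lemma shr_val {m c : ℕ} (d : ℕ) (hd : 1 ≤ d) (A : Fin (2 * (m + 1)) → Fin (c + 1))
    (idx : Fin (2 * m)) :
    (shr d hd A idx : ℕ) = min (A (Fin.castLE (by omega) idx) : ℕ) (d - 1) := rfl

def ext2 {m c : ℕ} (d : ℕ) (hd : d < c) (B : Fin (2 * m) → Fin d) :
    Fin (2 * (m + 1)) → Fin (c + 1) :=
  fun idx => if h : (idx : ℕ) < 2 * m then Fin.castLE (by omega) (B ⟨(idx : ℕ), h⟩)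
    else if (idx : ℕ) = 2 * m then ⟨d, by omega⟩ else ⟨c, by omega⟩

lemma ext2_val {m c : ℕ} (d : ℕ) (hd : d < c) (B : Fin (2 * m) → Fin d)
    (idx : Fin (2 * (m + 1))) :
    (ext2 d hd B idx : ℕ) =
      if h : (idx : ℕ) < 2 * m then (B ⟨(idx : ℕ), h⟩ : ℕ)
      else if (idx : ℕ) = 2 * m then d else c := by
  unfold ext2
  by_cases h1 : (idx : ℕ) < 2 * m
  · rw [dif_pos h1, dif_pos h1, Fin.coe_castLE]
  · rw [dif_neg h1, dif_neg h1]
    by_cases h2 : (idx : ℕ) = 2 * m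
    · rw [if_pos h2, if_pos h2]
    · rw [if_neg h2, if_neg h2]

lemma part2 (c m t k : ℕ) (hk1 : 1 ≤ k) (hkt : k ≤ t) (htc : t ≤ c) (hkc : k < c) :
    ∑ A ∈ Finset.univ.filter
        (fun A : Fin (2 * (m + 1)) → Fin (c + 1) =>
          ((StrictMono A ∧ balls' A = t) ∧ (A ⟨2 * m + 1, by omega⟩ : ℕ) = c) ∧
            c - (A ⟨2 * m, by omega⟩ : ℕ) = k),
      q ^ energy' A = q ^ (c - k) * g (c - k) m (t - k) := by
  rw [g, Finset.mul_sum]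
  have hd1 : 1 ≤ c - k := by omega
  have hdc : c - k < c := by omega
  set d := c - k with hd
  -- facts about members of the LHS filter
  have key : ∀ A : Fin (2 * (m + 1)) → Fin (c + 1),
      (((StrictMono A ∧ balls' A = t) ∧ (A ⟨2 * m + 1, by omega⟩ : ℕ) = c) ∧
        c - (A ⟨2 * m, by omega⟩ : ℕ) = k) →
      (A ⟨2 * m, by omega⟩ : ℕ) = d ∧ ∀ idx : Fin (2 * m), (res A idx : ℕ) < d := by
    intro A ⟨⟨⟨hmono, hb⟩, htop⟩, hpen⟩
    have hlt : A ⟨2 * m, by omega⟩ < A ⟨2 * m + 1, by omega⟩ := hmono (by simp [Fin.lt_def])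
    rw [Fin.lt_def, htop] at hlt
    have hpd : (A ⟨2 * m, by omega⟩ : ℕ) = d := by omega
    refine ⟨hpd, fun idx => ?_⟩
    have := hmono (show Fin.castLE (by omega) idx < (⟨2 * m, by omega⟩ : Fin (2 * (m + 1))) by
      rw [Fin.lt_def]; simpa using idx.isLt)
    rw [Fin.lt_def, hpd] at this
    exact this
  have shr_eq_res : ∀ A : Fin (2 * (m + 1)) → Fin (c + 1),
      (∀ idx : Fin (2 * m), (res A idx : ℕ) < d) →
      ∀ idx : Fin (2 * m), (res A idx : ℕ) = (shr d hd1 A idx : ℕ) := by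
    intro A hres idx
    have := hres idx
    rw [shr_val]
    simp only [res] at this ⊢
    omega
  refine Finset.sum_nbij' (i := shr d hd1) (j := ext2 d hdc) ?_ ?_ ?_ ?_ ?_
  · -- forward maps into target filter
    intro A hA
    simp only [Finset.mem_filter, Finset.mem_univ, true_and] at hA
    obtain ⟨hpd, hres⟩ := key A hA
    obtain ⟨⟨⟨hmono, hb⟩, htop⟩, hpen⟩ := hA
    rw [Finset.mem_filter]
    refine ⟨Finset.mem_univ _, val_congr_strictMono (shr_eq_res A hres) (res_strictMono hmono), ?_⟩
    rw [← val_congr_balls (shr_eq_res A hres)]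
    have := split_balls A
    rw [hb, htop, hpd] at this
    omega
  · -- backward maps into source filter
    intro B hB
    simp only [Finset.mem_filter, Finset.mem_univ, true_and] at hB
    obtain ⟨hmono, hb⟩ := hB
    have hAmono : StrictMono (ext2 d hdc B) := by
      intro x y hxy
      rw [Fin.lt_def] at hxy ⊢
      rw [ext2_val, ext2_val]
      have hy := y.isLt
      by_cases h1 : (x : ℕ) < 2 * m
      · rw [dif_pos h1]
        by_cases h2 : (y : ℕ) < 2 * m
        · rw [dif_pos h2]
          have := hmono (show (⟨(x : ℕ), h1⟩ : Fin (2 * m)) < ⟨(y : ℕ), h2⟩ by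
            rw [Fin.lt_def]; exact hxy)
          rw [Fin.lt_def] at this
          exact this
        · rw [dif_neg h2]
          have := (B ⟨(x : ℕ), h1⟩).isLt
          split_ifs <;> omega
      · rw [dif_neg h1]
        have h2 : ¬ (y : ℕ) < 2 * m := by omega
        rw [dif_neg h2]
        split_ifs <;> omega
    have hrv : ∀ idx : Fin (2 * m), (res (ext2 d hdc B) idx : ℕ) = (B idx : ℕ) := by
      intro idx
      simp only [res]
      rw [ext2_val]
      rw [dif_pos (show ((Fin.castLE (by omega : 2 * m ≤ 2 * (m + 1)) idx : Fin (2 * (m + 1))) : ℕ) < 2 * m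
        from by simpa using idx.isLt)]
      congr 1
    have hAtop : (ext2 d hdc B ⟨2 * m + 1, by omega⟩ : ℕ) = c := by
      rw [ext2_val]
      rw [dif_neg (by simp), if_neg (by simp)]
    have hApen : (ext2 d hdc B ⟨2 * m, by omega⟩ : ℕ) = d := by
      rw [ext2_val]
      rw [dif_neg (by simp), if_pos rfl]
    rw [Finset.mem_filter]
    refine ⟨Finset.mem_univ _, ⟨⟨hAmono, ?_⟩, hAtop⟩, by rw [hApen]; omega⟩
    have := split_balls (ext2 d hdc B)
    rw [hAtop, hApen, val_congr_balls hrv, hb] at this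
    omega
  · -- left inverse
    intro A hA
    simp only [Finset.mem_filter, Finset.mem_univ, true_and] at hA
    obtain ⟨hpd, hres⟩ := key A hA
    funext idx
    apply Fin.ext
    rw [ext2_val]
    have hx := idx.isLt
    split_ifs with h1 h2
    · rw [shr_val]
      have h3 := hres ⟨(idx : ℕ), h1⟩
      simp only [res] at h3
      have hcast : Fin.castLE (by omega : 2 * m ≤ 2 * (m + 1)) ⟨(idx : ℕ), h1⟩ = idx :=
        Fin.ext rfl
      rw [hcast] at h3 ⊢
      omega
    · have heq : idx = (⟨2 * m, by omega⟩ : Fin (2 * (m + 1))) := Fin.ext h2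
      rw [heq, hpd]
    · have heq : idx = (⟨2 * m + 1, by omega⟩ : Fin (2 * (m + 1))) :=
        Fin.ext (show (idx : ℕ) = 2 * m + 1 by omega)
      rw [heq, hA.1.2]
  · -- right inverse
    intro B hB
    funext idx
    apply Fin.ext
    rw [shr_val]
    have hlt : ((Fin.castLE (by omega : 2 * m ≤ 2 * (m + 1)) idx : Fin (2 * (m + 1))) : ℕ) < 2 * m := by
      simpa using idx.isLt
    rw [ext2_val, dif_pos hlt]
    have h1 := (B idx).isLt
    have hBeq : (⟨((Fin.castLE (by omega : 2 * m ≤ 2 * (m + 1)) idx : Fin (2 * (m + 1))) : ℕ), hlt⟩ : Fin (2 * m)) = idx :=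
      Fin.ext rfl
    rw [hBeq]
    omega
  · -- summand equality
    intro A hA
    simp only [Finset.mem_filter, Finset.mem_univ, true_and] at hA
    obtain ⟨hpd, hres⟩ := key A hA
    rw [← pow_add]
    congr 1
    have := split_energy A
    rw [hpd, val_congr_energy (shr_eq_res A hres)] at this
    omega

lemma g_big (M m t : ℕ) (h : M < 2 * m) : g M m t = 0 := by
  apply Finset.sum_eq_zero
  intro A hA
  simp only [Finset.mem_filter] at hA
  have := Fintype.card_le_of_injective A hA.2.1.injective
  simp at this
  omega

lemma g_zero (M t : ℕ) : g M 0 t = if t = 0 then 1 else 0 := by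
  have h : ∀ A : Fin (2 * 0) → Fin M, balls' A = 0 := by
    intro A; simp [balls']
  have h2 : ∀ A : Fin (2 * 0) → Fin M, energy' A = 0 := by
    intro A; simp [energy']
  have h3 : ∀ A : Fin (2 * 0) → Fin M, StrictMono A := by
    intro A i j hij; exact absurd hij (by omega)
  rcases eq_or_ne t 0 with rfl | ht
  · rw [g, Finset.filter_true_of_mem (by intro A _; exact ⟨h3 A, h A⟩)]
    simp only [h2]
    rw [Finset.sum_const]
    simp
  · rw [g, Finset.filter_false_of_mem (by intro A _; simp [h A]; omega)]
    simp [ht]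

lemma part2c (c m t k : ℕ) (hc : 1 ≤ c) (hkc : c = k) (htc : c = t) :
    ∑ A ∈ Finset.univ.filter
        (fun A : Fin (2 * (m + 1)) → Fin (c + 1) =>
          ((StrictMono A ∧ balls' A = t) ∧ (A ⟨2 * m + 1, by omega⟩ : ℕ) = c) ∧
            c - (A ⟨2 * m, by omega⟩ : ℕ) = k),
      q ^ energy' A = q ^ (c - k) * g (c - k) m (t - k) := by
  subst hkc; subst htc
  rw [Nat.sub_self]
  rcases m with _ | m'
  · -- m = 0 : unique state (0, c)
    rw [g_zero]
    simp only [if_pos rfl, pow_zero, one_mul]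
    set A₀ : Fin (2 * (0 + 1)) → Fin (c + 1) :=
      fun idx => if (idx : ℕ) = 0 then ⟨0, by omega⟩ else ⟨c, by omega⟩ with hA₀
    have hval : ∀ idx : Fin (2 * (0 + 1)), (A₀ idx : ℕ) = if (idx : ℕ) = 0 then 0 else c := by
      intro idx; rw [hA₀]; split_ifs <;> simp_all
    have hfilter : Finset.univ.filter
        (fun A : Fin (2 * (0 + 1)) → Fin (c + 1) =>
          ((StrictMono A ∧ balls' A = c) ∧ (A ⟨2 * 0 + 1, by omega⟩ : ℕ) = c) ∧
            c - (A ⟨2 * 0, by omega⟩ : ℕ) = c) = {A₀} := by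
      apply Finset.eq_singleton_iff_unique_mem.mpr
      constructor
      · rw [Finset.mem_filter]
        refine ⟨Finset.mem_univ _, ⟨⟨?_, ?_⟩, ?_⟩, ?_⟩
        · intro x y hxy
          rw [Fin.lt_def] at hxy ⊢
          have hx := x.isLt; have hy := y.isLt
          rw [hval, hval]
          split_ifs <;> omega
        · unfold balls'
          rw [Fin.sum_univ_one]
          rw [hval, hval]
          simp [oddIdx, evenIdx]
        · rw [hval]; simp
        · rw [hval]; simp
      · intro A hA
        rw [Finset.mem_filter] at hA
        obtain ⟨-, ⟨⟨hmono, hb⟩, htop⟩, hpen⟩ := hA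
        have hp0 : (A ⟨2 * 0, by omega⟩ : ℕ) = 0 := by
          have := (A ⟨2 * 0, by omega⟩).isLt; omega
        funext idx
        apply Fin.ext
        rw [hval]
        have hx := idx.isLt
        split_ifs with h1
        · have : idx = (⟨2 * 0, by omega⟩ : Fin (2 * (0 + 1))) := Fin.ext h1
          rw [this, hp0]
        · have : idx = (⟨2 * 0 + 1, by omega⟩ : Fin (2 * (0 + 1))) :=
            Fin.ext (show (idx : ℕ) = 2 * 0 + 1 by omega)
          rw [this, htop]
    rw [hfilter, Finset.sum_singleton]
    have : energy' A₀ = 0 := by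
      unfold energy'
      rw [Fin.sum_univ_one, hval]
      simp [evenIdx]
    rw [this, pow_zero]
    simp
  · -- m ≥ 1 : empty
    rw [g_big 0 (m' + 1) 0 (by omega), mul_zero]
    apply Finset.sum_eq_zero
    intro A hA
    rw [Finset.mem_filter] at hA
    obtain ⟨-, ⟨⟨hmono, hb⟩, htop⟩, hpen⟩ := hA
    have hp0 : (A ⟨2 * (m' + 1), by omega⟩ : ℕ) = 0 := by
      have := (A ⟨2 * (m' + 1), by omega⟩).isLt; omega
    have hlt : A ⟨0, by omega⟩ < A ⟨2 * (m' + 1), by omega⟩ :=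
      hmono (Fin.mk_lt_mk.mpr (by omega))
    rw [Fin.lt_def, hp0] at hlt
    omega

lemma step (c m t : ℕ) (ht : 1 ≤ t) (htc : t ≤ c) :
    g (c + 1) (m + 1) t =
      g c (m + 1) t + ∑ k ∈ Finset.Icc 1 t, q ^ (c - k) * g (c - k) m (t - k) := by
  have hsplit := Finset.sum_filter_add_sum_filter_not
    (Finset.univ.filter
      (fun A : Fin (2 * (m + 1)) → Fin (c + 1) => StrictMono A ∧ balls' A = t))
    (fun A => (A ⟨2 * m + 1, by omega⟩ : ℕ) = c)
    (fun A => q ^ energy' A)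
  rw [g, ← hsplit, add_comm]
  congr 1
  · -- part without the top wall at c
    rw [Finset.filter_filter]
    have hcong : Finset.univ.filter
        (fun A : Fin (2 * (m + 1)) → Fin (c + 1) =>
          (StrictMono A ∧ balls' A = t) ∧ ¬ (A ⟨2 * m + 1, by omega⟩ : ℕ) = c) =
        Finset.univ.filter
        (fun A : Fin (2 * (m + 1)) → Fin (c + 1) =>
          (StrictMono A ∧ balls' A = t) ∧ ∀ i, (A i : ℕ) < c) := by
      apply Finset.filter_congr
      intro A _
      constructor
      · rintro ⟨⟨hmono, hb⟩, htop⟩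
        refine ⟨⟨hmono, hb⟩, fun i => ?_⟩
        have hle : A i ≤ A ⟨2 * m + 1, by omega⟩ :=
          hmono.monotone (by rw [Fin.le_def]; simp; omega)
        rw [Fin.le_def] at hle
        have := (A ⟨2 * m + 1, by omega⟩).isLt
        omega
      · rintro ⟨⟨hmono, hb⟩, hlt⟩
        exact ⟨⟨hmono, hb⟩, by have := hlt ⟨2 * m + 1, by omega⟩; omega⟩
    rw [hcong, part1 c (m + 1) t (by omega)]
  · -- part with the top wall at c, fiberwise over k
    have hmaps : ∀ A ∈ (Finset.univ.filter
        (fun A : Fin (2 * (m + 1)) → Fin (c + 1) => StrictMono A ∧ balls' A = t)).filter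
        (fun A => (A ⟨2 * m + 1, by omega⟩ : ℕ) = c),
        c - (A ⟨2 * m, by omega⟩ : ℕ) ∈ Finset.Icc 1 t := by
      intro A hA
      rw [Finset.filter_filter, Finset.mem_filter] at hA
      obtain ⟨-, ⟨hmono, hb⟩, htop⟩ := hA
      have hlt : A ⟨2 * m, by omega⟩ < A ⟨2 * m + 1, by omega⟩ :=
        hmono (Fin.mk_lt_mk.mpr (by omega))
      rw [Fin.lt_def, htop] at hlt
      have hsb := split_balls A
      rw [hb, htop] at hsb
      rw [Finset.mem_Icc]
      omega
    rw [← Finset.sum_fiberwise_of_maps_to hmaps (fun A => q ^ energy' A)]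
    apply Finset.sum_congr rfl
    intro k hk
    rw [Finset.mem_Icc] at hk
    rw [Finset.filter_filter, Finset.filter_filter]
    have hassoc : Finset.univ.filter
        (fun A : Fin (2 * (m + 1)) → Fin (c + 1) =>
          (StrictMono A ∧ balls' A = t) ∧ (A ⟨2 * m + 1, by omega⟩ : ℕ) = c ∧
            c - (A ⟨2 * m, by omega⟩ : ℕ) = k) =
        Finset.univ.filter
        (fun A : Fin (2 * (m + 1)) → Fin (c + 1) =>
          ((StrictMono A ∧ balls' A = t) ∧ (A ⟨2 * m + 1, by omega⟩ : ℕ) = c) ∧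
            c - (A ⟨2 * m, by omega⟩ : ℕ) = k) :=
      Finset.filter_congr (fun A _ => by tauto)
    rw [hassoc]
    by_cases hkc : k < c
    · exact part2 c m t k hk.1 hk.2 htc hkc
    · exact part2c c m t k (by omega) (by omega) (by omega)

noncomputable def G (M t N : ℕ) : RatFunc ℚ := ∑ m ∈ Finset.range N, g M m t

lemma G_ext (M t N N' : ℕ) (h : M < 2 * N) (h' : M < 2 * N') : G M t N = G M t N' := by
  wlog hNN : N ≤ N'
  · exact (this M t N' N h' h (by omega)).symm
  unfold G
  rw [← Finset.sum_range_add_sum_Ico _ hNN]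
  have hz : ∑ m ∈ Finset.Ico N N', g M m t = 0 := by
    apply Finset.sum_eq_zero
    intro m hm
    simp only [Finset.mem_Ico] at hm
    exact g_big M m t (by omega)
  rw [hz, add_zero]

lemma G_small (M u N : ℕ) (hN : 1 ≤ N) (hM : M ≤ 1) : G M u N = if u = 0 then 1 else 0 := by
  unfold G
  rw [Finset.sum_eq_single_of_mem 0 (Finset.mem_range.mpr (by omega))
    (fun b _ hb => g_big M b u (by omega))]
  exact g_zero M u

lemma ZG (M t : ℕ) : Z M t = G (M + 1) t (M + 2) := rfl

/-- `Z(L,s)` satisfies the recursion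
`Z(L,s) = Z(L-1,s) + ∑_{k=1}^s q^(L-k) · Z(L-k-1, s-k)` for `L ≥ 1` and `s ≥ 1`. -/
theorem Z_recursion (L s : ℕ) (hL : 1 ≤ L) (hs : 1 ≤ s) (hsL : s ≤ L) :
    Z L s = Z (L - 1) s + ∑ k ∈ Finset.Icc 1 s, q ^ (L - k) * Z (L - k - 1) (s - k) := by
  have hGL : G L s (L + 2) = Z (L - 1) s := by
    rw [ZG (L - 1) s, show L - 1 + 1 = L from by omega, show L - 1 + 2 = L + 1 from by omega]
    exact G_ext L s (L + 2) (L + 1) (by omega) (by omega)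
  have hGk : ∀ k ∈ Finset.Icc 1 s,
      q ^ (L - k) * Z (L - k - 1) (s - k) = q ^ (L - k) * G (L - k) (s - k) (L + 1) := by
    intro k hk
    rw [Finset.mem_Icc] at hk
    congr 1
    by_cases hkL : k < L
    · rw [ZG (L - k - 1) (s - k), show L - k - 1 + 1 = L - k from by omega,
        show L - k - 1 + 2 = L - k + 1 from by omega]
      exact G_ext (L - k) (s - k) (L - k + 1) (L + 1) (by omega) (by omega)
    · rw [show L - k - 1 = 0 from by omega, show L - k = 0 from by omega,
          show s - k = 0 from by omega, ZG 0 0,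
          G_small 1 0 2 (by omega) (by omega), G_small 0 0 (L + 1) (by omega) (by omega)]
  rw [ZG L s, ← hGL, Finset.sum_congr rfl hGk]
  -- main computation
  unfold G
  rw [show L + 2 = (L + 1) + 1 from rfl]
  rw [Finset.sum_range_succ' (fun m => g (L + 1) m s) (L + 1),
      Finset.sum_range_succ' (fun m => g L m s) (L + 1)]
  have hstep : ∀ m ∈ Finset.range (L + 1), g (L + 1) (m + 1) s =
      g L (m + 1) s + ∑ k ∈ Finset.Icc 1 s, q ^ (L - k) * g (L - k) m (s - k) :=
    fun m _ => step L m s hs hsL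
  rw [Finset.sum_congr rfl hstep, Finset.sum_add_distrib]
  rw [show g (L + 1) 0 s = g L 0 s from by rw [g_zero, g_zero]]
  rw [Finset.sum_comm]
  have hmul : ∀ k ∈ Finset.Icc 1 s,
      ∑ m ∈ Finset.range (L + 1), q ^ (L - k) * g (L - k) m (s - k) =
        q ^ (L - k) * ∑ m ∈ Finset.range (L + 1), g (L - k) m (s - k) :=
    fun k _ => (Finset.mul_sum _ _ _).symm
  rw [Finset.sum_congr rfl hmul]
  ring
end

section
/- Define Z⁺(L,s) as the sum of q^(α_1 + α_3 + ⋯ + α_{2n-1}) over all strictly increasing integer sequences 0 ≤ α_1 < α_2 < ⋯ < α_{2n} ≤ L with ∑_{k=1}^n (α_{2k}-α_{2k-1}) = s, satisfying the additional highest-weight conditions 2∑_{k=1}^{j-1} α_{2k} + α_{2j} ≤ 2∑_{k=1}^{j} α_{2k-1} for all 1 ≤ j ≤ n. Then for 0 ≤ s ≤ L/2, Z⁺(L,s) = [L choose s]_q − [L choose s-1]_q. -/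
attribute [local instance] Classical.propDecidable

/-- The highest-weight conditions
`2∑_{k=1}^{j-1} α_{2k} + α_{2j} ≤ 2∑_{k=1}^{j} α_{2k-1}` for all `1 ≤ j ≤ n`. -/
def highest {L n : ℕ} (A : Fin (2 * n) → Fin (L + 1)) : Prop :=
  ∀ j : Fin n,
    2 * (∑ k ∈ Finset.univ.filter (fun k : Fin n => k < j), (A (oddIdx k) : ℕ)) +
        (A (oddIdx j) : ℕ)
      ≤ 2 * ∑ k ∈ Finset.univ.filter (fun k : Fin n => k ≤ j), (A (evenIdx k) : ℕ)

/-- The partition function `Z⁺(L,s)` over highest-weight states. -/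
noncomputable def Zplus (L s : ℕ) : RatFunc ℚ :=
  ∑ n ∈ Finset.range (L + 2),
    ∑ A ∈ Finset.univ.filter
        (fun A : Fin (2 * n) → Fin (L + 1) => StrictMono A ∧ highest A ∧ balls A = s),
      q ^ energy A

open Finset

lemma q_ne_zero : q ≠ 0 := by
  simpa [q] using RatFunc.X_ne_zero (K := ℚ)

lemma one_sub_q_pow_ne_zero (m : ℕ) (hm : 0 < m) : (1 : RatFunc ℚ) - q ^ m ≠ 0 := by
  have h : (Polynomial.X ^ m - Polynomial.C (1:ℚ)) ≠ 0 :=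
    Polynomial.X_pow_sub_C_ne_zero hm 1
  intro hc
  apply h
  apply RatFunc.algebraMap_injective ℚ
  have : (algebraMap (Polynomial ℚ) (RatFunc ℚ)) (Polynomial.X ^ m - Polynomial.C 1)
      = (RatFunc.X ^ m - 1) := by
    simp [map_sub, map_pow, RatFunc.algebraMap_X]
  rw [this, map_zero]
  have : (RatFunc.X : RatFunc ℚ) ^ m = 1 := by
    have := sub_eq_zero.mp hc
    simpa [q] using this.symm
  rw [this]; ring

/-- `Nq n = ∏_{k=1}^n (1-q^k)` with ℕ index. -/
noncomputable def Nq (n : ℕ) : RatFunc ℚ := ∏ k ∈ range n, (1 - q ^ (k+1))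

lemma Nq_ne_zero (n : ℕ) : Nq n ≠ 0 := by
  apply prod_ne_zero_iff.2
  intro k _
  exact one_sub_q_pow_ne_zero (k+1) (Nat.succ_pos k)

lemma Nq_succ (n : ℕ) : Nq (n+1) = Nq n * (1 - q ^ (n+1)) := prod_range_succ _ n

lemma Icc_prod_eq (n : ℕ) : ∏ k ∈ Icc (1:ℤ) (n:ℤ), (1 - q ^ k) = Nq n := by
  induction n with
  | zero => simp [Nq]
  | succ n ih =>
    have hins : Icc (1:ℤ) ((n:ℤ)+1) = insert ((n:ℤ)+1) (Icc (1:ℤ) (n:ℤ)) := by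
      ext x; simp; omega
    have hni : ((n:ℤ)+1) ∉ Icc (1:ℤ) (n:ℤ) := by simp
    rw [show ((n+1:ℕ):ℤ) = (n:ℤ)+1 by push_cast; ring, hins, prod_insert hni, ih, Nq_succ]
    rw [show ((n:ℤ)+1) = ((n+1:ℕ):ℤ) by push_cast; ring, zpow_natCast]
    ring

lemma qb_eq (n m : ℕ) (h : m ≤ n) :
    qb n m = Nq n / (Nq m * Nq (n - m)) := by
  rw [qb, if_pos ⟨Int.ofNat_nonneg m, by exact_mod_cast h⟩]
  rw [show (n:ℤ) - m = ((n - m : ℕ) : ℤ) by omega]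
  rw [Icc_prod_eq, Icc_prod_eq, Icc_prod_eq]

lemma qb_neg (n m : ℤ) (h : m < 0) : qb n m = 0 := by
  rw [qb, if_neg]; rintro ⟨h1, _⟩; omega

lemma qb_gt (n m : ℤ) (h : n < m) : qb n m = 0 := by
  rw [qb, if_neg]; rintro ⟨_, h2⟩; omega

lemma qb_zero (n : ℕ) : qb n 0 = 1 := by
  rw [show ((0:ℤ)) = ((0:ℕ):ℤ) by simp, qb_eq n 0 (Nat.zero_le n)]
  simp only [Nq, Nat.sub_zero, range_zero, prod_empty, one_mul]
  exact div_self (Nq_ne_zero n)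

lemma qb_self (n : ℕ) : qb n n = 1 := by
  rw [qb_eq n n le_rfl]
  simp only [Nat.sub_self, Nq, range_zero, prod_empty, mul_one]
  exact div_self (Nq_ne_zero n)




open Finset

lemma coreN (n m' : ℕ) (h : m'+1 ≤ n) :
    qb ((n+1:ℕ):ℤ) ((m'+1:ℕ):ℤ)
      = qb (n:ℕ) ((m':ℕ):ℤ) + q^(m'+1) * qb (n:ℤ) ((m'+1:ℕ):ℤ) := by
  rw [qb_eq (n+1) (m'+1) (by omega), qb_eq n m' (by omega), qb_eq n (m'+1) (by omega)]
  rw [show n + 1 - (m'+1) = n - m' by omega, show n - m' = (n-m'-1)+1 by omega,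
    Nq_succ (n-m'-1), Nq_succ n, Nq_succ m']
  rw [show n - (m'+1) = n-m'-1 by omega]
  have e1 : (1:RatFunc ℚ) - q^(n+1) = (1 - q^(m'+1)) + q^(m'+1) * (1 - q^(n-m'-1+1)) := by
    have : q^(m'+1) * q^(n-m'-1+1) = q^(n+1) := by
      rw [← pow_add]; congr 1; omega
    rw [mul_sub, mul_one, this]; ring
  have h1 := Nq_ne_zero n
  have h2 := Nq_ne_zero m'
  have h3 := Nq_ne_zero (n-m'-1)
  have h4 := one_sub_q_pow_ne_zero (m'+1) (by omega)
  have h5 := one_sub_q_pow_ne_zero (n-m'-1+1) (by omega)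
  field_simp
  rw [e1]

lemma coreN2 (n m' : ℕ) (h : m'+1 ≤ n) :
    qb ((n+1:ℕ):ℤ) ((m'+1:ℕ):ℤ)
      = qb (n:ℕ) ((m'+1:ℕ):ℤ) + q^(n-m') * qb (n:ℕ) ((m':ℕ):ℤ) := by
  rw [qb_eq (n+1) (m'+1) (by omega), qb_eq n m' (by omega), qb_eq n (m'+1) (by omega)]
  rw [show n + 1 - (m'+1) = n - m' by omega]
  rw [show n - (m'+1) = n-m'-1 by omega]
  rw [show n - m' = (n-m'-1)+1 by omega, Nq_succ (n-m'-1), Nq_succ n, Nq_succ m']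
  have e1 : (1:RatFunc ℚ) - q^(n+1) = (1 - q^(n-m'-1+1)) + q^(n-m'-1+1) * (1 - q^(m'+1)) := by
    have : q^(n-m'-1+1) * q^(m'+1) = q^(n+1) := by
      rw [← pow_add]; congr 1; omega
    rw [mul_sub, mul_one, this]; ring
  have h1 := Nq_ne_zero n
  have h2 := Nq_ne_zero m'
  have h3 := Nq_ne_zero (n-m'-1)
  have h4 := one_sub_q_pow_ne_zero (m'+1) (by omega)
  have h5 := one_sub_q_pow_ne_zero (n-m'-1+1) (by omega)
  rw [e1]
  simp only [Nat.add_sub_cancel]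
  generalize Nq n = N1 at *
  generalize Nq m' = N2 at *
  generalize Nq (n-m'-1) = N3 at *
  generalize q^(m'+1) = a at *
  generalize q^(n-m'-1+1) = b at *
  field_simp

lemma pascal1 (n m : ℕ) :
    qb ((n:ℤ)+1) (m:ℤ) = qb (n:ℤ) ((m:ℤ)-1) + q ^ m * qb (n:ℤ) (m:ℤ) := by
  rw [show ((n:ℤ)+1) = ((n+1:ℕ):ℤ) by push_cast; ring]
  rcases Nat.eq_zero_or_pos m with rfl | hm
  · rw [qb_neg (n:ℤ) (((0:ℕ):ℤ)-1) (by norm_num),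
      show ((0:ℕ):ℤ) = (0:ℤ) by simp, qb_zero, qb_zero]
    ring
  rcases lt_or_ge (n+1) m with hgt | hle
  · rw [qb_gt _ _ (by exact_mod_cast hgt), qb_gt _ ((m:ℤ)-1) (by omega),
      qb_gt _ (m:ℤ) (by exact_mod_cast (by omega : n < m))]
    ring
  rcases eq_or_lt_of_le hle with heq | hlt2
  · subst heq
    rw [qb_self, show ((n+1:ℕ):ℤ)-1 = ((n:ℕ):ℤ) by push_cast; ring, qb_self,
      qb_gt (n:ℤ) ((n+1:ℕ):ℤ) (by exact_mod_cast (by omega : n < n+1))]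
    ring
  · obtain ⟨m', rfl⟩ : ∃ m', m = m'+1 := ⟨m-1, by omega⟩
    rw [show ((m'+1:ℕ):ℤ)-1 = ((m':ℕ):ℤ) by push_cast; ring]
    exact coreN n m' (by omega)

lemma pascal2 (n m : ℕ) (h : m ≤ n+1) :
    qb ((n:ℤ)+1) (m:ℤ) = qb (n:ℤ) (m:ℤ) + q ^ (n+1-m) * qb (n:ℤ) ((m:ℤ)-1) := by
  rw [show ((n:ℤ)+1) = ((n+1:ℕ):ℤ) by push_cast; ring]
  rcases Nat.eq_zero_or_pos m with rfl | hm
  · rw [qb_neg (n:ℤ) (((0:ℕ):ℤ)-1) (by norm_num),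
      show ((0:ℕ):ℤ) = (0:ℤ) by simp, qb_zero, qb_zero]
    ring
  rcases eq_or_lt_of_le h with heq | hlt2
  · subst heq
    rw [qb_self, show ((n+1:ℕ):ℤ)-1 = ((n:ℕ):ℤ) by push_cast; ring, qb_self,
      qb_gt (n:ℤ) ((n+1:ℕ):ℤ) (by exact_mod_cast (by omega : n < n+1)),
      show n+1-(n+1) = 0 by omega]
    ring
  · obtain ⟨m', rfl⟩ : ∃ m', m = m'+1 := ⟨m-1, by omega⟩
    rw [show ((m'+1:ℕ):ℤ)-1 = ((m':ℕ):ℤ) by push_cast; ring,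
      show n+1-(m'+1) = n - m' by omega]
    exact coreN2 n m' (by omega)

lemma qb_symm_boundary (s : ℕ) (hs : 1 ≤ s) :
    qb ((2*s-1:ℕ):ℤ) (s:ℤ) = qb ((2*s-1:ℕ):ℤ) ((s:ℤ)-1) := by
  rw [show ((s:ℤ)-1) = ((s-1:ℕ):ℤ) by omega, qb_eq (2*s-1) s (by omega),
    qb_eq (2*s-1) (s-1) (by omega), show 2*s-1-s = s-1 by omega,
    show 2*s-1-(s-1) = s by omega, mul_comm (Nq (s-1)) (Nq s)]




/-- summand predicate -/
def isSt {M n s : ℕ} (A : Fin (2*n) → Fin (M+1)) : Prop :=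
  StrictMono A ∧ highest A ∧ balls A = s

noncomputable def Wn (M n s : ℕ) : RatFunc ℚ :=
  ∑ A ∈ Finset.univ.filter
      (fun A : Fin (2*n) → Fin (M+1) => StrictMono A ∧ highest A ∧ balls A = s),
    q ^ energy A

lemma Zplus_eq_W (M s : ℕ) : Zplus M s = ∑ n ∈ range (M+2), Wn M n s := rfl

-- val congruence lemmas
section congr
variable {n M M' : ℕ} (A : Fin (2*n) → Fin (M+1)) (B : Fin (2*n) → Fin (M'+1))
  (h : ∀ i, (A i : ℕ) = (B i : ℕ))

include h in
lemma sm_congr : StrictMono A ↔ StrictMono B := by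
  constructor <;> intro hs i j hij <;> have := hs hij <;>
    have h1 := h i <;> have h2 := h j <;>
    simp only [Fin.lt_def] at * <;> omega

include h in
lemma balls_congr : balls A = balls B := by
  unfold balls; exact Finset.sum_congr rfl (fun k _ => by rw [h, h])

include h in
lemma energy_congr : energy A = energy B := by
  unfold energy; exact Finset.sum_congr rfl (fun k _ => by rw [h])

include h in
lemma highest_congr : highest A ↔ highest B := by
  unfold highest
  apply forall_congr'
  intro j
  rw [h, Finset.sum_congr rfl (fun k _ => (h (oddIdx k))),
    Finset.sum_congr rfl (fun k _ => (h (evenIdx k)))]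
end congr

lemma Wn_zero (M n s : ℕ) (h : M+1 < 2*n) : Wn M n s = 0 := by
  rw [Wn, Finset.sum_eq_zero]
  intro A hA
  rw [mem_filter] at hA
  exfalso
  have := Fintype.card_le_of_injective A hA.2.1.injective
  simp [Fintype.card_fin] at this
  omega

-- sum over filter < last
lemma sum_flt_last {n : ℕ} (f : Fin (n+1) → ℕ) :
    ∑ k ∈ univ.filter (fun k => k < Fin.last n), f k = ∑ k : Fin n, f k.castSucc := by
  rw [sum_filter, Fin.sum_univ_castSucc]
  simp [Fin.castSucc_lt_last]

lemma sum_fle_last {n : ℕ} (f : Fin (n+1) → ℕ) :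
    ∑ k ∈ univ.filter (fun k => k ≤ Fin.last n), f k = ∑ k : Fin (n+1), f k := by
  rw [filter_true_of_mem]
  exact fun x _ => Fin.le_last x

lemma sum_flt_cast {n : ℕ} (j : Fin n) (f : Fin (n+1) → ℕ) :
    ∑ k ∈ univ.filter (fun k => k < j.castSucc), f k
      = ∑ k ∈ univ.filter (fun k => k < j), f k.castSucc := by
  rw [sum_filter, sum_filter, Fin.sum_univ_castSucc]
  have : ¬ (Fin.last n < j.castSucc) := by
    have := Fin.castSucc_lt_last j; exact not_lt.2 this.le
  simp [this, Fin.castSucc_lt_castSucc_iff]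

lemma sum_fle_cast {n : ℕ} (j : Fin n) (f : Fin (n+1) → ℕ) :
    ∑ k ∈ univ.filter (fun k => k ≤ j.castSucc), f k
      = ∑ k ∈ univ.filter (fun k => k ≤ j), f k.castSucc := by
  rw [sum_filter, sum_filter, Fin.sum_univ_castSucc]
  have : ¬ (Fin.last n ≤ j.castSucc) := by
    have := Fin.castSucc_lt_last j; exact not_le.2 this
  simp [this, Fin.castSucc_le_castSucc_iff]

lemma evenIdx_lt_oddIdx {n : ℕ} (k : Fin n) : evenIdx k < oddIdx k := by
  simp [evenIdx, oddIdx, Fin.lt_def]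

lemma balls_int {M n : ℕ} (A : Fin (2*n) → Fin (M+1)) (hA : StrictMono A) :
    (balls A : ℤ) = ∑ k : Fin n, ((A (oddIdx k) : ℕ) : ℤ)
      - ∑ k : Fin n, ((A (evenIdx k) : ℕ) : ℤ) := by
  rw [balls, Nat.cast_sum, ← Finset.sum_sub_distrib]
  apply Finset.sum_congr rfl
  intro k _
  have : (A (evenIdx k) : ℕ) ≤ (A (oddIdx k) : ℕ) :=
    le_of_lt (hA (evenIdx_lt_oddIdx k))
  omega

lemma oddIdx_last_top {n : ℕ} (i : Fin (2*(n+1))) : i ≤ oddIdx (Fin.last n) := by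
  have := i.isLt; simp [oddIdx, Fin.le_def]; omega

lemma highest_iff_last {M n : ℕ} (A : Fin (2*(n+1)) → Fin (M+1)) (hA : StrictMono A) :
    highest A ↔ ((∀ j : Fin (n+1), j ≠ Fin.last n →
        2 * (∑ k ∈ univ.filter (fun k => k < j), (A (oddIdx k) : ℕ)) + (A (oddIdx j) : ℕ)
          ≤ 2 * ∑ k ∈ univ.filter (fun k => k ≤ j), (A (evenIdx k) : ℕ))
      ∧ 2 * balls A ≤ (A (oddIdx (Fin.last n)) : ℕ)) := by
  have key : (2 * (∑ k ∈ univ.filter (fun k => k < Fin.last n), (A (oddIdx k) : ℕ))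
        + (A (oddIdx (Fin.last n)) : ℕ)
        ≤ 2 * ∑ k ∈ univ.filter (fun k => k ≤ Fin.last n), (A (evenIdx k) : ℕ))
      ↔ 2 * balls A ≤ (A (oddIdx (Fin.last n)) : ℕ) := by
    rw [sum_flt_last (fun k => (A (oddIdx k) : ℕ)), sum_fle_last (fun k => (A (evenIdx k) : ℕ))]
    have hb := balls_int A hA
    have hsplit : ∑ k : Fin (n+1), ((A (oddIdx k) : ℕ) : ℤ)
        = ∑ k : Fin n, ((A (oddIdx k.castSucc) : ℕ) : ℤ) + ((A (oddIdx (Fin.last n)) : ℕ) : ℤ) :=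
      Fin.sum_univ_castSucc _
    have hcast : ((∑ k : Fin n, (A (oddIdx k.castSucc) : ℕ) : ℕ) : ℤ)
        = ∑ k : Fin n, ((A (oddIdx k.castSucc) : ℕ) : ℤ) := Nat.cast_sum _ _
    have hcast2 : ((∑ k : Fin (n+1), (A (evenIdx k) : ℕ) : ℕ) : ℤ)
        = ∑ k : Fin (n+1), ((A (evenIdx k) : ℕ) : ℤ) := Nat.cast_sum _ _
    zify
    omega
  constructor
  · intro hh
    refine ⟨fun j _ => hh j, key.1 (hh (Fin.last n))⟩
  · rintro ⟨h1, h2⟩ j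
    rcases eq_or_ne j (Fin.last n) with rfl | hj
    · exact key.2 h2
    · exact h1 j hj

lemma top_mem {M n : ℕ} (A : Fin (2*(n+1)) → Fin (M+1)) (hA : StrictMono A) :
    Fin.last M ∈ Set.range A ↔ A (oddIdx (Fin.last n)) = Fin.last M := by
  constructor
  · rintro ⟨i, hi⟩
    have h1 : A i ≤ A (oddIdx (Fin.last n)) := hA.monotone (oddIdx_last_top i)
    have h2 := Fin.le_last (A (oddIdx (Fin.last n)))
    rw [hi] at h1
    exact le_antisymm h2 h1
  · intro h; exact ⟨_, h⟩

lemma second_val {M n : ℕ} (A : Fin (2*(n+1)) → Fin (M+2)) (hA : StrictMono A)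
    (htop : (A (oddIdx (Fin.last n)) : ℕ) = M+1)
    (hsec : ∃ i, (A i : ℕ) = M) : (A (evenIdx (Fin.last n)) : ℕ) = M := by
  obtain ⟨i, hi⟩ := hsec
  have hine : i ≠ oddIdx (Fin.last n) := by
    intro h; rw [h] at hi; omega
  have hile : i ≤ evenIdx (Fin.last n) := by
    have h1 : i < oddIdx (Fin.last n) := lt_of_le_of_ne (oddIdx_last_top i) hine
    simp only [Fin.lt_def, Fin.le_def, oddIdx, evenIdx] at h1 ⊢
    omega
  have h2 : A i ≤ A (evenIdx (Fin.last n)) := hA.monotone hile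
  have h3 : A (evenIdx (Fin.last n)) < A (oddIdx (Fin.last n)) := hA (evenIdx_lt_oddIdx _)
  simp only [Fin.lt_def, Fin.le_def] at h2 h3
  omega

lemma B1 (M n s : ℕ) :
    ∑ A ∈ univ.filter (fun A : Fin (2*n) → Fin (M+2) =>
        (StrictMono A ∧ highest A ∧ balls A = s) ∧ ¬ (Fin.last (M+1) ∈ Set.range A)),
      q ^ energy A
    = Wn M n s := by
  rw [Wn]
  refine Finset.sum_nbij' (i := fun A i => (⟨min (A i).1 M, by omega⟩ : Fin (M+1)))
    (j := fun A' i => Fin.castSucc (A' i)) ?_ ?_ ?_ ?_ ?_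
  · intro A hA
    rw [mem_filter] at hA ⊢
    obtain ⟨-, ⟨hsm, hhw, hb⟩, hno⟩ := hA
    have hval : ∀ i, (A i : ℕ) ≤ M := by
      intro i
      rcases Nat.lt_or_ge (A i).1 (M+1) with h | h
      · omega
      · exfalso; exact hno ⟨i, by apply Fin.ext; simp; omega⟩
    have hv : ∀ i, (A i : ℕ) = ((⟨min (A i).1 M, by omega⟩ : Fin (M+1)) : ℕ) := by
      intro i; have := hval i; simp; omega
    exact ⟨mem_univ _, (sm_congr _ _ hv).1 hsm, (highest_congr _ _ hv).1 hhw,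
      (balls_congr _ _ hv).symm.trans hb⟩
  · intro A' hA'
    rw [mem_filter] at hA' ⊢
    obtain ⟨-, hsm, hhw, hb⟩ := hA'
    have hv : ∀ i, (A' i : ℕ) = ((Fin.castSucc (A' i)) : ℕ) := by simp
    have hnotop : ¬ (Fin.last (M+1) ∈ Set.range (fun i => Fin.castSucc (A' i))) := by
      rintro ⟨i, hi⟩
      have h2 : ((A' i : ℕ)) = M+1 := by simpa using congrArg Fin.val hi
      have h3 := (A' i).isLt
      omega
    exact ⟨mem_univ _, ⟨(sm_congr _ _ hv).1 hsm, (highest_congr _ _ hv).1 hhw,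
      (balls_congr _ _ hv).symm.trans hb⟩, hnotop⟩
  · intro A hA
    rw [mem_filter] at hA
    obtain ⟨-, -, hno⟩ := hA
    have hval : ∀ i, (A i : ℕ) ≤ M := by
      intro i
      rcases Nat.lt_or_ge (A i).1 (M+1) with h | h
      · omega
      · exfalso; exact hno ⟨i, by apply Fin.ext; simp; omega⟩
    funext i
    apply Fin.ext
    have := hval i
    simp only [Fin.coe_castSucc]
    omega
  · intro A' _
    funext i
    apply Fin.ext
    have := (A' i).isLt
    simp only [Fin.coe_castSucc]
    omega
  · intro A hA
    rw [mem_filter] at hA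
    obtain ⟨-, -, hno⟩ := hA
    have hval : ∀ i, (A i : ℕ) ≤ M := by
      intro i
      rcases Nat.lt_or_ge (A i).1 (M+1) with h | h
      · omega
      · exfalso; exact hno ⟨i, by apply Fin.ext; simp; omega⟩
    have hv : ∀ i, (A i : ℕ) = ((⟨min (A i).1 M, by omega⟩ : Fin (M+1)) : ℕ) := by
      intro i; have := hval i; simp; omega
    rw [energy_congr _ _ hv]

noncomputable def WFn (M n s : ℕ) : RatFunc ℚ :=
  ∑ A ∈ Finset.univ.filter
      (fun A : Fin (2*n) → Fin (M+1) =>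
        (StrictMono A ∧ highest A ∧ balls A = s) ∧ Fin.last M ∈ Set.range A),
    q ^ energy A

noncomputable def Fp (M s : ℕ) : RatFunc ℚ := ∑ n ∈ range (M+2), WFn M n s

lemma WFn_zero (M n s : ℕ) (h : M+1 < 2*n) : WFn M n s = 0 := by
  rw [WFn, Finset.sum_eq_zero]
  intro A hA
  rw [mem_filter] at hA
  exfalso
  have := Fintype.card_le_of_injective A hA.2.1.1.injective
  simp [Fintype.card_fin] at this
  omega

lemma Wn_split (M n s : ℕ) :
    Wn M n s
      = WFn M n s + ∑ A ∈ univ.filter (fun A : Fin (2*n) → Fin (M+1) =>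
          (StrictMono A ∧ highest A ∧ balls A = s) ∧ ¬ (Fin.last M ∈ Set.range A)),
        q ^ energy A := by
  have h := Finset.sum_filter_add_sum_filter_not
    (univ.filter (fun A : Fin (2*n) → Fin (M+1) => StrictMono A ∧ highest A ∧ balls A = s))
    (fun A => Fin.last M ∈ Set.range A) (fun A => q ^ energy A)
  rw [Finset.filter_filter, Finset.filter_filter] at h
  rw [Wn, WFn, ← h]

lemma T1 (L s : ℕ) : Zplus (L+1) s = Zplus L s + Fp (L+1) s := by
  rw [Zplus_eq_W, Zplus_eq_W, Fp]
  have : ∀ n, Wn (L+1) n s = WFn (L+1) n s + Wn L n s := by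
    intro n
    rw [Wn_split, B1]
  rw [Finset.sum_congr rfl (fun n _ => this n), Finset.sum_add_distrib]
  rw [show L+1+2 = (L+2)+1 by ring, Finset.sum_range_succ (fun n => Wn L n s)]
  rw [Wn_zero L (L+2) s (by omega)]
  ring

section almost
variable {M M' n' : ℕ} (A : Fin (2*(n'+1)) → Fin (M+1)) (B : Fin (2*(n'+1)) → Fin (M'+1))

lemma oddIdx_ne_last {k : Fin (n'+1)} (hk : k ≠ Fin.last n') : oddIdx k ≠ oddIdx (Fin.last n') := by
  intro h
  apply hk
  have := congrArg Fin.val h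
  simp only [oddIdx] at this
  apply Fin.ext
  simp only [Fin.last]
  omega

lemma evenIdx_ne_oddlast (k : Fin (n'+1)) : evenIdx k ≠ oddIdx (Fin.last n') := by
  intro h
  have := congrArg Fin.val h
  simp only [evenIdx, oddIdx] at this
  omega

variable (hsame : ∀ i, i ≠ oddIdx (Fin.last n') → (A i : ℕ) = (B i : ℕ))

include hsame in
lemma energy_almost : energy A = energy B := by
  unfold energy
  exact Finset.sum_congr rfl (fun k _ => by rw [hsame _ (evenIdx_ne_oddlast k)])

include hsame in
lemma balls_almost (hA : StrictMono A) (hB : StrictMono B) :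
    (balls A : ℤ) = (balls B : ℤ)
      + ((A (oddIdx (Fin.last n')) : ℕ) : ℤ) - ((B (oddIdx (Fin.last n')) : ℕ) : ℤ) := by
  rw [balls_int A hA, balls_int B hB]
  have h1 : ∑ k : Fin (n'+1), ((A (oddIdx k) : ℕ) : ℤ)
      = ∑ k : Fin n', ((A (oddIdx k.castSucc) : ℕ) : ℤ) + ((A (oddIdx (Fin.last n')) : ℕ) : ℤ) :=
    Fin.sum_univ_castSucc _
  have h2 : ∑ k : Fin (n'+1), ((B (oddIdx k) : ℕ) : ℤ)
      = ∑ k : Fin n', ((B (oddIdx k.castSucc) : ℕ) : ℤ) + ((B (oddIdx (Fin.last n')) : ℕ) : ℤ) :=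
    Fin.sum_univ_castSucc _
  have h3 : ∑ k : Fin n', ((A (oddIdx k.castSucc) : ℕ) : ℤ)
      = ∑ k : Fin n', ((B (oddIdx k.castSucc) : ℕ) : ℤ) := by
    apply Finset.sum_congr rfl
    intro k _
    rw [hsame _ (oddIdx_ne_last (by exact Fin.ne_of_lt (Fin.castSucc_lt_last k)))]
  have h4 : ∑ k : Fin (n'+1), ((A (evenIdx k) : ℕ) : ℤ)
      = ∑ k : Fin (n'+1), ((B (evenIdx k) : ℕ) : ℤ) := by
    apply Finset.sum_congr rfl
    intro k _
    rw [hsame _ (evenIdx_ne_oddlast k)]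
  rw [h1, h2, h3, h4]
  ring

include hsame in
lemma highest_transfer (hA : StrictMono A) (hB : StrictMono B) (hhB : highest B)
    (h2 : 2 * balls A ≤ (A (oddIdx (Fin.last n')) : ℕ)) : highest A := by
  rw [highest_iff_last A hA]
  refine ⟨?_, h2⟩
  intro j hj
  have hjlt : j < Fin.last n' := lt_of_le_of_ne (Fin.le_last j) hj
  have hcond := ((highest_iff_last B hB).1 hhB).1 j hj
  have e1 : ∑ k ∈ univ.filter (fun k => k < j), (A (oddIdx k) : ℕ)
      = ∑ k ∈ univ.filter (fun k => k < j), (B (oddIdx k) : ℕ) := by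
    apply Finset.sum_congr rfl
    intro k hk
    rw [mem_filter] at hk
    exact hsame _ (oddIdx_ne_last (Fin.ne_of_lt (lt_trans hk.2 hjlt)))
  have e2 : ∑ k ∈ univ.filter (fun k => k ≤ j), (A (evenIdx k) : ℕ)
      = ∑ k ∈ univ.filter (fun k => k ≤ j), (B (evenIdx k) : ℕ) := by
    apply Finset.sum_congr rfl
    intro k _
    exact hsame _ (evenIdx_ne_oddlast k)
  have e3 : (A (oddIdx j) : ℕ) = (B (oddIdx j) : ℕ) := hsame _ (oddIdx_ne_last hj)
  rw [e1, e2, e3]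
  exact hcond

end almost

def down3 {D M : ℕ} (A : Fin D → Fin (M+3)) : Fin D → Fin (M+2) :=
  fun i => ⟨min (A i).1 (M+1), by omega⟩

def up3 {D M : ℕ} (A' : Fin D → Fin (M+2)) : Fin D → Fin (M+3) :=
  fun i => ⟨if (A' i).1 = M+1 then M+2 else (A' i).1,
    by split
       · omega
       · have := (A' i).isLt; omega⟩

lemma down3_val {D M : ℕ} (A : Fin D → Fin (M+3)) (i : Fin D) :
    (down3 A i : ℕ) = min (A i).1 (M+1) := rfl

lemma up3_val {D M : ℕ} (A' : Fin D → Fin (M+2)) (i : Fin D) :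
    (up3 A' i : ℕ) = if (A' i).1 = M+1 then M+2 else (A' i).1 := rfl

lemma B3 (M n s : ℕ) (h2s : 2*(s+1) ≤ M+2) :
    ∑ A ∈ univ.filter (fun A : Fin (2*n) → Fin (M+3) =>
        ((StrictMono A ∧ highest A ∧ balls A = s+1) ∧ Fin.last (M+2) ∈ Set.range A)
          ∧ ¬ (∃ i, (A i : ℕ) = M+1)),
      q ^ energy A
    = WFn (M+1) n s := by
  rcases n with _ | n'
  · rw [WFn]
    rw [Finset.sum_eq_zero, Finset.sum_eq_zero]
    · intro A hA
      rw [mem_filter] at hA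
      obtain ⟨-, -, ⟨i, -⟩⟩ := hA
      exact absurd i.isLt (by omega)
    · intro A hA
      rw [mem_filter] at hA
      obtain ⟨-, ⟨-, ⟨i, -⟩⟩, -⟩ := hA
      exact absurd i.isLt (by omega)
  · rw [WFn]
    refine Finset.sum_nbij' (i := fun A => down3 A) (j := fun A' => up3 A') ?_ ?_ ?_ ?_ ?_
    · intro A hA
      rw [mem_filter] at hA ⊢
      obtain ⟨-, ⟨⟨hsm, hhw, hb⟩, htm⟩, hno⟩ := hA
      have hne : ∀ i, (A i : ℕ) ≠ M+1 := fun i h => hno ⟨i, h⟩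
      have htop := (top_mem A hsm).1 htm
      have htopv : (A (oddIdx (Fin.last n')) : ℕ) = M+2 := by rw [htop]; rfl
      have hoth : ∀ i, i ≠ oddIdx (Fin.last n') → (A i : ℕ) ≤ M := by
        intro i hi
        have h1 : A i < A (oddIdx (Fin.last n')) :=
          hsm (lt_of_le_of_ne (oddIdx_last_top i) hi)
        rw [Fin.lt_def] at h1
        have := hne i
        omega
      have hsame : ∀ i, i ≠ oddIdx (Fin.last n') → (A i : ℕ) = (down3 A i : ℕ) := by
        intro i hi
        have := hoth i hi
        rw [down3_val]
        omega
      have hsmd : StrictMono (down3 A) := by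
        intro a b hab
        have h1 := hsm hab
        rw [Fin.lt_def] at h1 ⊢
        rw [down3_val, down3_val]
        have := hne a
        have := hne b
        omega
      have hdt : (down3 A (oddIdx (Fin.last n')) : ℕ) = M+1 := by
        rw [down3_val, htopv]
        omega
      have hbd : balls (down3 A) = s := by
        have h5 := balls_almost A (down3 A) hsame hsm hsmd
        rw [hb] at h5
        omega
      refine ⟨mem_univ _, ⟨hsmd, ?_, hbd⟩, ?_⟩
      · apply highest_transfer _ A (fun i hi => (hsame i hi).symm) hsmd hsm hhw
        rw [hdt, hbd]
        omega
      · exact ⟨oddIdx (Fin.last n'), Fin.ext (by rw [hdt]; rfl)⟩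
    · intro A' hA'
      rw [mem_filter] at hA' ⊢
      obtain ⟨-, ⟨hsm, hhw, hb⟩, htm⟩ := hA'
      have htop := (top_mem A' hsm).1 htm
      have htopv : (A' (oddIdx (Fin.last n')) : ℕ) = M+1 := by rw [htop]; rfl
      have hoth : ∀ i, i ≠ oddIdx (Fin.last n') → (A' i : ℕ) ≤ M := by
        intro i hi
        have h1 : A' i < A' (oddIdx (Fin.last n')) :=
          hsm (lt_of_le_of_ne (oddIdx_last_top i) hi)
        rw [Fin.lt_def] at h1
        omega
      have hsame : ∀ i, i ≠ oddIdx (Fin.last n') → (up3 A' i : ℕ) = (A' i : ℕ) := by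
        intro i hi
        have := hoth i hi
        rw [up3_val]
        split <;> omega
      have hsmu : StrictMono (up3 A') := by
        intro a b hab
        have h1 := hsm hab
        rw [Fin.lt_def] at h1 ⊢
        rw [up3_val, up3_val]
        have := (A' b).isLt
        split <;> split <;> omega
      have hupv : (up3 A' (oddIdx (Fin.last n')) : ℕ) = M+2 := by
        rw [up3_val, htopv]
        simp
      have hbu : balls (up3 A') = s+1 := by
        have h5 := balls_almost (up3 A') A' hsame hsmu hsm
        rw [hb, hupv, htopv] at h5
        omega
      refine ⟨mem_univ _, ⟨⟨hsmu, ?_, hbu⟩, ?_⟩, ?_⟩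
      · apply highest_transfer _ A' hsame hsmu hsm hhw
        rw [hbu, hupv]
        omega
      · exact ⟨oddIdx (Fin.last n'), Fin.ext (by rw [hupv]; rfl)⟩
      · rintro ⟨i, hi⟩
        rw [up3_val] at hi
        have := (A' i).isLt
        split at hi <;> omega
    · intro A hA
      rw [mem_filter] at hA
      obtain ⟨-, ⟨⟨hsm, -, -⟩, htm⟩, hno⟩ := hA
      have hne : ∀ i, (A i : ℕ) ≠ M+1 := fun i h => hno ⟨i, h⟩
      funext i
      apply Fin.ext
      rw [up3_val, down3_val]
      have h1 := hne i
      have h2 := (A i).isLt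
      split <;> omega
    · intro A' hA'
      funext i
      apply Fin.ext
      rw [down3_val, up3_val]
      have h2 := (A' i).isLt
      split <;> omega
    · intro A hA
      rw [mem_filter] at hA
      obtain ⟨-, ⟨⟨hsm, hhw, hb⟩, htm⟩, hno⟩ := hA
      have hne : ∀ i, (A i : ℕ) ≠ M+1 := fun i h => hno ⟨i, h⟩
      have htop := (top_mem A hsm).1 htm
      have htopv : (A (oddIdx (Fin.last n')) : ℕ) = M+2 := by rw [htop]; rfl
      have hoth : ∀ i, i ≠ oddIdx (Fin.last n') → (A i : ℕ) ≤ M := by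
        intro i hi
        have h1 : A i < A (oddIdx (Fin.last n')) :=
          hsm (lt_of_le_of_ne (oddIdx_last_top i) hi)
        rw [Fin.lt_def] at h1
        have := hne i
        omega
      have hsame : ∀ i, i ≠ oddIdx (Fin.last n') → (A i : ℕ) = (down3 A i : ℕ) := by
        intro i hi
        have := hoth i hi
        rw [down3_val]
        omega
      exact congrArg (fun e => q ^ e) (energy_almost A (down3 A) hsame)

def castD {n : ℕ} (i : Fin (2*n)) : Fin (2*(n+1)) := ⟨i.1, by have := i.isLt; omega⟩

def drop4 {M n : ℕ} (A : Fin (2*(n+1)) → Fin (M+3)) : Fin (2*n) → Fin (M+1) :=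
  fun i => ⟨min (A (castD i)).1 M, by omega⟩

def ext4 {M n : ℕ} (A' : Fin (2*n) → Fin (M+1)) : Fin (2*(n+1)) → Fin (M+3) :=
  fun i => if h : i.1 < 2*n then ⟨(A' ⟨i.1, h⟩).1, by have := (A' ⟨i.1,h⟩).isLt; omega⟩
           else if i.1 = 2*n then ⟨M+1, by omega⟩ else ⟨M+2, by omega⟩

lemma drop4_val {M n : ℕ} (A : Fin (2*(n+1)) → Fin (M+3)) (i : Fin (2*n)) :
    (drop4 A i : ℕ) = min (A (castD i)).1 M := rfl

lemma ext4_app {M n : ℕ} (A' : Fin (2*n) → Fin (M+1)) (i : Fin (2*n)) :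
    (ext4 A' (castD i) : ℕ) = (A' i : ℕ) := by
  have h : (castD i).1 < 2*n := i.isLt
  simp only [ext4, dif_pos h]
  rfl

lemma ext4_even {M n : ℕ} (A' : Fin (2*n) → Fin (M+1)) :
    (ext4 A' (evenIdx (Fin.last n)) : ℕ) = M+1 := by
  have h1 : (evenIdx (Fin.last n) : Fin (2*(n+1))).1 = 2*n := by simp [evenIdx]
  simp only [ext4, h1]
  simp

lemma ext4_odd {M n : ℕ} (A' : Fin (2*n) → Fin (M+1)) :
    (ext4 A' (oddIdx (Fin.last n)) : ℕ) = M+2 := by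
  have h1 : (oddIdx (Fin.last n) : Fin (2*(n+1))).1 = 2*n+1 := by simp [oddIdx]
  simp only [ext4, h1]
  simp

lemma oddIdx_castSucc {n : ℕ} (k : Fin n) :
    (oddIdx (k.castSucc) : Fin (2*(n+1))) = castD (oddIdx k) := by
  apply Fin.ext; simp [oddIdx, castD]

lemma evenIdx_castSucc {n : ℕ} (k : Fin n) :
    (evenIdx (k.castSucc) : Fin (2*(n+1))) = castD (evenIdx k) := by
  apply Fin.ext; simp [evenIdx, castD]


lemma balls_drop {M n : ℕ} (A : Fin (2*(n+1)) → Fin (M+3))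
    (htopo : (A (oddIdx (Fin.last n)) : ℕ) = M+2)
    (heven : (A (evenIdx (Fin.last n)) : ℕ) = M+1)
    (hlt : ∀ i : Fin (2*n), (A (castD i) : ℕ) ≤ M) :
    balls A = balls (drop4 A) + 1 := by
  rw [balls, balls, Fin.sum_univ_castSucc
    (f := fun k : Fin (n+1) => (A (oddIdx k) : ℕ) - (A (evenIdx k) : ℕ))]
  rw [htopo, heven]
  congr 1
  · apply Finset.sum_congr rfl
    intro k _
    rw [oddIdx_castSucc, evenIdx_castSucc, drop4_val, drop4_val]
    have h1 := hlt (oddIdx k)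
    have h2 := hlt (evenIdx k)
    omega
  · omega

lemma energy_drop {M n : ℕ} (A : Fin (2*(n+1)) → Fin (M+3))
    (heven : (A (evenIdx (Fin.last n)) : ℕ) = M+1)
    (hlt : ∀ i : Fin (2*n), (A (castD i) : ℕ) ≤ M) :
    energy A = energy (drop4 A) + (M+1) := by
  rw [energy, energy, Fin.sum_univ_castSucc
    (f := fun k : Fin (n+1) => (A (evenIdx k) : ℕ))]
  rw [heven]
  congr 1
  apply Finset.sum_congr rfl
  intro k _
  rw [evenIdx_castSucc, drop4_val]
  have h2 := hlt (evenIdx k)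
  omega

lemma balls_ext {M n : ℕ} (A' : Fin (2*n) → Fin (M+1)) :
    balls (ext4 A') = balls A' + 1 := by
  rw [balls, balls, Fin.sum_univ_castSucc
    (f := fun k : Fin (n+1) => (ext4 A' (oddIdx k) : ℕ) - (ext4 A' (evenIdx k) : ℕ))]
  rw [ext4_odd, ext4_even]
  congr 1
  · apply Finset.sum_congr rfl
    intro k _
    rw [oddIdx_castSucc, evenIdx_castSucc, ext4_app, ext4_app]
  · omega

lemma energy_ext {M n : ℕ} (A' : Fin (2*n) → Fin (M+1)) :
    energy (ext4 A') = energy A' + (M+1) := by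
  rw [energy, energy, Fin.sum_univ_castSucc
    (f := fun k : Fin (n+1) => (ext4 A' (evenIdx k) : ℕ))]
  rw [ext4_even]
  congr 1
  apply Finset.sum_congr rfl
  intro k _
  rw [evenIdx_castSucc, ext4_app]

lemma highest_pair {M M' n : ℕ} (A : Fin (2*(n+1)) → Fin (M+1)) (A'' : Fin (2*n) → Fin (M'+1))
    (hv : ∀ i, (A (castD i) : ℕ) = (A'' i : ℕ)) (j : Fin n) :
    (2 * (∑ k ∈ univ.filter (fun k => k < j.castSucc), (A (oddIdx k) : ℕ))
        + (A (oddIdx j.castSucc) : ℕ)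
      ≤ 2 * ∑ k ∈ univ.filter (fun k => k ≤ j.castSucc), (A (evenIdx k) : ℕ))
    ↔ (2 * (∑ k ∈ univ.filter (fun k => k < j), (A'' (oddIdx k) : ℕ)) + (A'' (oddIdx j) : ℕ)
      ≤ 2 * ∑ k ∈ univ.filter (fun k => k ≤ j), (A'' (evenIdx k) : ℕ)) := by
  rw [sum_flt_cast j (fun k => (A (oddIdx k) : ℕ)), sum_fle_cast j (fun k => (A (evenIdx k) : ℕ))]
  rw [Finset.sum_congr rfl (fun k _ => by rw [oddIdx_castSucc, hv (oddIdx k)] :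
    ∀ k ∈ univ.filter (fun k => k < j), (A (oddIdx (Fin.castSucc k)) : ℕ) = (A'' (oddIdx k) : ℕ))]
  rw [Finset.sum_congr rfl (fun k _ => by rw [evenIdx_castSucc, hv (evenIdx k)] :
    ∀ k ∈ univ.filter (fun k => k ≤ j), (A (evenIdx (Fin.castSucc k)) : ℕ) = (A'' (evenIdx k) : ℕ))]
  rw [oddIdx_castSucc, hv (oddIdx j)]

lemma B4 (M n s : ℕ) (h2s : 2*(s+1) ≤ M+2) :
    ∑ A ∈ univ.filter (fun A : Fin (2*(n+1)) → Fin (M+3) =>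
        ((StrictMono A ∧ highest A ∧ balls A = s+1) ∧ Fin.last (M+2) ∈ Set.range A)
          ∧ (∃ i, (A i : ℕ) = M+1)),
      q ^ energy A
    = q^(M+1) * Wn M n s := by
  rw [Wn, Finset.mul_sum]
  refine Finset.sum_nbij' (i := fun A => drop4 A) (j := fun A' => ext4 A') ?_ ?_ ?_ ?_ ?_
  · intro A hA
    rw [mem_filter] at hA ⊢
    obtain ⟨-, ⟨⟨hsm, hhw, hb⟩, htm⟩, hsec⟩ := hA
    have htopo : (A (oddIdx (Fin.last n)) : ℕ) = M+2 := by
      rw [(top_mem A hsm).1 htm]; rfl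
    have heven : (A (evenIdx (Fin.last n)) : ℕ) = M+1 :=
      second_val (M := M+1) A hsm htopo hsec
    have hlt : ∀ i : Fin (2*n), (A (castD i) : ℕ) ≤ M := by
      intro i
      have hlt2 : castD i < evenIdx (Fin.last n) := by
        have hv2 : (castD i).1 = i.1 := rfl
        have hv3 : ((evenIdx (Fin.last n)) : Fin (2*(n+1))).1 = 2*n := by
          simp [evenIdx]
        rw [Fin.lt_def, hv2, hv3]
        exact i.isLt
      have := hsm hlt2
      rw [Fin.lt_def] at this
      omega
    have hv : ∀ i, (A (castD i) : ℕ) = (drop4 A i : ℕ) := by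
      intro i
      rw [drop4_val]
      have := hlt i
      omega
    have hsmd : StrictMono (drop4 A) := by
      intro a b hab
      have h1 : castD a < castD b := by
        simp only [Fin.lt_def, castD]
        exact hab
      have h2 := hsm h1
      rw [Fin.lt_def] at h2 ⊢
      rw [drop4_val, drop4_val]
      have := hlt a
      have := hlt b
      omega
    have hbd := balls_drop A htopo heven hlt
    have hhwd : highest (drop4 A) := by
      intro j
      exact (highest_pair A (drop4 A) hv j).1 (hhw j.castSucc)
    exact ⟨mem_univ _, hsmd, hhwd, show balls (drop4 A) = s by omega⟩
  · intro A' hA'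
    rw [mem_filter] at hA' ⊢
    obtain ⟨-, hsm, hhw, hb⟩ := hA'
    have hvlt : ∀ i : Fin (2*n), (A' i : ℕ) ≤ M := fun i => by
      have := (A' i).isLt; omega
    have hsme : StrictMono (ext4 A') := by
      intro a b hab
      rw [Fin.lt_def] at hab ⊢
      rcases Nat.lt_or_ge a.1 (2*n) with ha | ha <;>
        rcases Nat.lt_or_ge b.1 (2*n) with hb' | hb'
      · have e1 : (ext4 A' a : ℕ) = (A' ⟨a.1, ha⟩ : ℕ) := ext4_app A' ⟨a.1, ha⟩
        have e2 : (ext4 A' b : ℕ) = (A' ⟨b.1, hb'⟩ : ℕ) := ext4_app A' ⟨b.1, hb'⟩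
        have h3 : (⟨a.1, ha⟩ : Fin (2*n)) < ⟨b.1, hb'⟩ := hab
        have h4 := hsm h3
        rw [Fin.lt_def] at h4
        omega
      · have e1 : (ext4 A' a : ℕ) = (A' ⟨a.1, ha⟩ : ℕ) := ext4_app A' ⟨a.1, ha⟩
        have h5 := hvlt ⟨a.1, ha⟩
        have e2 : (ext4 A' b : ℕ) = if b.1 = 2*n then M+1 else M+2 := by
          simp only [ext4, dif_neg (by omega : ¬ b.1 < 2*n)]
          split <;> rfl
        split at e2 <;> omega
      · omega
      · have hb2 := b.isLt
        have e1 : (ext4 A' a : ℕ) = M+1 := by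
          simp only [ext4, dif_neg (by omega : ¬ a.1 < 2*n)]
          rw [if_pos (by omega : a.1 = 2*n)]
        have e2 : (ext4 A' b : ℕ) = M+2 := by
          simp only [ext4, dif_neg (by omega : ¬ b.1 < 2*n)]
          rw [if_neg (by omega : ¬ b.1 = 2*n)]
        omega
    have hbe := balls_ext A'
    have hhwe : highest (ext4 A') := by
      rw [highest_iff_last _ hsme]
      constructor
      · intro j hj
        obtain ⟨j', rfl⟩ := Fin.exists_castSucc_eq.2 hj
        exact (highest_pair (ext4 A') A' (fun i => ext4_app A' i) j').2 (hhw j')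
      · rw [hbe, hb, ext4_odd]
        omega
    refine ⟨mem_univ _, ⟨⟨hsme, hhwe, show balls (ext4 A') = s+1 by omega⟩, ?_⟩, ?_⟩
    · exact ⟨oddIdx (Fin.last n), Fin.ext (by rw [ext4_odd, Fin.val_last])⟩
    · exact ⟨evenIdx (Fin.last n), ext4_even A'⟩
  · intro A hA
    rw [mem_filter] at hA
    obtain ⟨-, ⟨⟨hsm, hhw, hb⟩, htm⟩, hsec⟩ := hA
    have htopo : (A (oddIdx (Fin.last n)) : ℕ) = M+2 := by
      rw [(top_mem A hsm).1 htm]; rfl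
    have heven : (A (evenIdx (Fin.last n)) : ℕ) = M+1 :=
      second_val (M := M+1) A hsm htopo hsec
    have hlt : ∀ i : Fin (2*n), (A (castD i) : ℕ) ≤ M := by
      intro i
      have hlt2 : castD i < evenIdx (Fin.last n) := by
        have hv2 : (castD i).1 = i.1 := rfl
        have hv3 : ((evenIdx (Fin.last n)) : Fin (2*(n+1))).1 = 2*n := by
          simp [evenIdx]
        rw [Fin.lt_def, hv2, hv3]
        exact i.isLt
      have := hsm hlt2
      rw [Fin.lt_def] at this
      omega
    funext i
    apply Fin.ext
    rcases Nat.lt_or_ge i.1 (2*n) with hi | hi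
    · have e1 : (ext4 (drop4 A) i : ℕ) = (drop4 A ⟨i.1, hi⟩ : ℕ) :=
        ext4_app (drop4 A) ⟨i.1, hi⟩
      rw [e1, drop4_val]
      have h5 := hlt ⟨i.1, hi⟩
      have e2 : A (castD (⟨i.1, hi⟩ : Fin (2*n))) = A i := rfl
      rw [e2] at h5 ⊢
      omega
    · have hi2 := i.isLt
      rcases Nat.lt_or_ge i.1 (2*n+1) with hi3 | hi3
      · have : i = evenIdx (Fin.last n) := Fin.ext (by simp [evenIdx, Fin.last]; omega)
        rw [this, ext4_even, heven]
      · have : i = oddIdx (Fin.last n) := Fin.ext (by simp [oddIdx, Fin.last]; omega)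
        rw [this, ext4_odd, htopo]
  · intro A' hA'
    funext i
    apply Fin.ext
    have e1 : (drop4 (ext4 A') i : ℕ) = min (ext4 A' (castD i)).1 M := drop4_val _ i
    rw [e1, ext4_app]
    have := (A' i).isLt
    omega
  · intro A hA
    rw [mem_filter] at hA
    obtain ⟨-, ⟨⟨hsm, hhw, hb⟩, htm⟩, hsec⟩ := hA
    have htopo : (A (oddIdx (Fin.last n)) : ℕ) = M+2 := by
      rw [(top_mem A hsm).1 htm]; rfl
    have heven : (A (evenIdx (Fin.last n)) : ℕ) = M+1 :=
      second_val (M := M+1) A hsm htopo hsec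
    have hlt : ∀ i : Fin (2*n), (A (castD i) : ℕ) ≤ M := by
      intro i
      have hlt2 : castD i < evenIdx (Fin.last n) := by
        have hv2 : (castD i).1 = i.1 := rfl
        have hv3 : ((evenIdx (Fin.last n)) : Fin (2*(n+1))).1 = 2*n := by
          simp [evenIdx]
        rw [Fin.lt_def, hv2, hv3]
        exact i.isLt
      have := hsm hlt2
      rw [Fin.lt_def] at this
      omega
    show q ^ energy A = q ^ (M+1) * q ^ energy (drop4 A)
    rw [energy_drop A heven hlt, pow_add]
    ring

lemma WFn_split (L n s : ℕ) :
    WFn (L+2) n (s+1)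
      = (∑ A ∈ univ.filter (fun A : Fin (2*n) → Fin (L+3) =>
            ((StrictMono A ∧ highest A ∧ balls A = s+1) ∧ Fin.last (L+2) ∈ Set.range A)
              ∧ (∃ i, (A i : ℕ) = L+1)),
          q ^ energy A)
        + (∑ A ∈ univ.filter (fun A : Fin (2*n) → Fin (L+3) =>
            ((StrictMono A ∧ highest A ∧ balls A = s+1) ∧ Fin.last (L+2) ∈ Set.range A)
              ∧ ¬ (∃ i, (A i : ℕ) = L+1)),
          q ^ energy A) := by
  have h := Finset.sum_filter_add_sum_filter_not
    (univ.filter (fun A : Fin (2*n) → Fin (L+3) =>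
      (StrictMono A ∧ highest A ∧ balls A = s+1) ∧ Fin.last (L+2) ∈ Set.range A))
    (fun A => ∃ i, (A i : ℕ) = L+1) (fun A => q ^ energy A)
  rw [Finset.filter_filter, Finset.filter_filter] at h
  rw [WFn, ← h]

lemma G0_zero (L s : ℕ) :
    (∑ A ∈ univ.filter (fun A : Fin (2*0) → Fin (L+3) =>
        ((StrictMono A ∧ highest A ∧ balls A = s+1) ∧ Fin.last (L+2) ∈ Set.range A)
          ∧ (∃ i, (A i : ℕ) = L+1)),
      q ^ energy A) = 0 := by
  rw [Finset.sum_eq_zero]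
  intro A hA
  rw [mem_filter] at hA
  obtain ⟨-, ⟨-, ⟨i, -⟩⟩, -⟩ := hA
  exact absurd i.isLt (by omega)

lemma T2 (L s : ℕ) (h2s : 2*(s+1) ≤ L+2) :
    Fp (L+2) (s+1) = Fp (L+1) s + q^(L+1) * Zplus L s := by
  rw [Fp, Zplus_eq_W]
  have hsplit : ∀ n, WFn (L+2) n (s+1)
      = (∑ A ∈ univ.filter (fun A : Fin (2*n) → Fin (L+3) =>
            ((StrictMono A ∧ highest A ∧ balls A = s+1) ∧ Fin.last (L+2) ∈ Set.range A)
              ∧ (∃ i, (A i : ℕ) = L+1)),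
          q ^ energy A) + WFn (L+1) n s := by
    intro n
    rw [WFn_split L n s, B3 L n s h2s]
  rw [Finset.sum_congr rfl (fun n _ => hsplit n), Finset.sum_add_distrib]
  have hG : (∑ n ∈ range (L+2+2),
      ∑ A ∈ univ.filter (fun A : Fin (2*n) → Fin (L+3) =>
          ((StrictMono A ∧ highest A ∧ balls A = s+1) ∧ Fin.last (L+2) ∈ Set.range A)
            ∧ (∃ i, (A i : ℕ) = L+1)),
        q ^ energy A)
      = q^(L+1) * ∑ n ∈ range (L+2), Wn L n s := by
    rw [show L+2+2 = (L+3)+1 by ring, Finset.sum_range_succ' _ (L+3)]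
    rw [G0_zero L s, add_zero]
    have hB4 : ∀ m, m ∈ range (L+3) →
        (∑ A ∈ univ.filter (fun A : Fin (2*(m+1)) → Fin (L+3) =>
            ((StrictMono A ∧ highest A ∧ balls A = s+1) ∧ Fin.last (L+2) ∈ Set.range A)
              ∧ (∃ i, (A i : ℕ) = L+1)),
          q ^ energy A) = q^(L+1) * Wn L m s := fun m _ => B4 L m s h2s
    rw [Finset.sum_congr rfl hB4, ← Finset.mul_sum]
    rw [show L+3 = (L+2)+1 by ring, Finset.sum_range_succ (fun m => Wn L m s) (L+2),
      Wn_zero L (L+2) s (by omega), add_zero]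
  have hH : (∑ n ∈ range (L+2+2), WFn (L+1) n s) = Fp (L+1) s := by
    rw [show L+2+2 = (L+1+2)+1 by ring, Finset.sum_range_succ (fun n => WFn (L+1) n s)]
    rw [WFn_zero (L+1) (L+1+2) s (by omega), add_zero, Fp]
  rw [hG, hH]
  ring

lemma Wn00 (M : ℕ) : Wn M 0 0 = 1 := by
  haveI : IsEmpty (Fin (2*0)) := ⟨fun i => absurd i.isLt (by omega)⟩
  rw [Wn, Finset.filter_true_of_mem]
  · rw [Finset.sum_congr rfl (fun A _ => (by rw [energy, Finset.univ_eq_empty,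
      Finset.sum_empty, pow_zero] : q ^ energy A = (1 : RatFunc ℚ)))]
    rw [Finset.sum_const, Finset.card_univ]
    simp
  · intro A _
    refine ⟨fun a => (IsEmpty.false a).elim, fun j => j.elim0, ?_⟩
    rw [balls, Finset.univ_eq_empty, Finset.sum_empty]

lemma balls_pos {M n' : ℕ} (A : Fin (2*(n'+1)) → Fin (M+1)) (hsm : StrictMono A) :
    1 ≤ balls A := by
  have h1 : 1 ≤ (A (oddIdx (0 : Fin (n'+1))) : ℕ) - (A (evenIdx (0 : Fin (n'+1))) : ℕ) := by
    have := hsm (evenIdx_lt_oddIdx (0 : Fin (n'+1)))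
    rw [Fin.lt_def] at this
    omega
  have h2 : (A (oddIdx (0 : Fin (n'+1))) : ℕ) - (A (evenIdx (0 : Fin (n'+1))) : ℕ)
      ≤ ∑ k : Fin (n'+1), ((A (oddIdx k) : ℕ) - (A (evenIdx k) : ℕ)) :=
    Finset.single_le_sum
      (f := fun k : Fin (n'+1) => (A (oddIdx k) : ℕ) - (A (evenIdx k) : ℕ))
      (fun i _ => Nat.zero_le _) (mem_univ (0 : Fin (n'+1)))
  rw [balls]
  omega

lemma Wn_pos_zero (M n : ℕ) : Wn M (n+1) 0 = 0 := by
  rw [Wn, Finset.sum_eq_zero]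
  intro A hA
  rw [mem_filter] at hA
  obtain ⟨-, hsm, -, hb⟩ := hA
  exact absurd hb (by have := balls_pos A hsm; omega)

lemma Zplus_s0 (M : ℕ) : Zplus M 0 = 1 := by
  rw [Zplus_eq_W, Finset.sum_range_succ' (fun n => Wn M n 0) (M+1)]
  rw [Wn00, Finset.sum_eq_zero (fun n _ => Wn_pos_zero M n)]
  ring

lemma WFn_s0 (M n : ℕ) : WFn M n 0 = 0 := by
  rcases n with _ | n'
  · rw [WFn, Finset.sum_eq_zero]
    intro A hA
    rw [mem_filter] at hA
    obtain ⟨-, -, ⟨i, -⟩⟩ := hA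
    exact absurd i.isLt (by omega)
  · rw [WFn, Finset.sum_eq_zero]
    intro A hA
    rw [mem_filter] at hA
    obtain ⟨-, ⟨hsm, -, hb⟩, -⟩ := hA
    exact absurd hb (by have := balls_pos A hsm; omega)

lemma Fp_s0 (M : ℕ) : Fp M 0 = 0 := by
  rw [Fp, Finset.sum_eq_zero (fun n _ => WFn_s0 M n)]

lemma Zplus_vanish (L s : ℕ) (hs : 1 ≤ s) (h : L < 2*s) : Zplus L s = 0 := by
  rw [Zplus_eq_W, Finset.sum_eq_zero]
  intro n _
  rcases n with _ | n'
  · rw [Wn, Finset.sum_eq_zero]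
    intro A hA
    rw [mem_filter] at hA
    obtain ⟨-, -, -, hb⟩ := hA
    rw [balls, Finset.univ_eq_empty, Finset.sum_empty] at hb
    omega
  · rw [Wn, Finset.sum_eq_zero]
    intro A hA
    rw [mem_filter] at hA
    obtain ⟨-, hsm, hhw, hb⟩ := hA
    exfalso
    have h2 := ((highest_iff_last A hsm).1 hhw).2
    have h3 := (A (oddIdx (Fin.last n'))).isLt
    omega


lemma pascal1' (n m : ℕ) :
    qb ((n+1:ℕ):ℤ) (m:ℤ) = qb (n:ℤ) ((m:ℤ)-1) + q ^ m * qb (n:ℤ) (m:ℤ) := by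
  rw [show ((n+1:ℕ):ℤ) = (n:ℤ)+1 by push_cast; ring]
  exact pascal1 n m

lemma pascal2' (n m : ℕ) (h : m ≤ n+1) :
    qb ((n+1:ℕ):ℤ) (m:ℤ) = qb (n:ℤ) (m:ℤ) + q ^ (n+1-m) * qb (n:ℤ) ((m:ℤ)-1) := by
  rw [show ((n+1:ℕ):ℤ) = (n:ℤ)+1 by push_cast; ring]
  exact pascal2 n m h

lemma big : ∀ L : ℕ,
    (∀ s, 1 ≤ s → 2*s ≤ L+1 → Zplus L s = qb (L:ℤ) (s:ℤ) - qb (L:ℤ) ((s:ℤ)-1))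
    ∧ (∀ s, 2*(s+1) ≤ L+2 → Fp (L+2) (s+1)
        = q^(L+1-s) * (qb ((L+1:ℕ):ℤ) (s:ℤ) - q * qb ((L+1:ℕ):ℤ) ((s:ℤ)-1))) := by
  intro L
  induction L using Nat.strong_induction_on with
  | _ L IH =>
  have hZ : ∀ s, 1 ≤ s → 2*s ≤ L+1 → Zplus L s = qb (L:ℤ) (s:ℤ) - qb (L:ℤ) ((s:ℤ)-1) := by
    intro s hs hsL
    rcases eq_or_lt_of_le hsL with heq | hlt
    · -- boundary: 2s = L+1
      have hv : Zplus L s = 0 := Zplus_vanish L s hs (by omega)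
      have hc : ((L:ℕ):ℤ) = ((2*s-1:ℕ):ℤ) := by omega
      rw [hv, hc, ← qb_symm_boundary s hs]
      ring
    · -- 2s ≤ L
      obtain ⟨L', rfl⟩ : ∃ L', L = L'+2 := ⟨L-2, by omega⟩
      obtain ⟨s', rfl⟩ : ∃ s', s = s'+1 := ⟨s-1, by omega⟩
      have t1 : Zplus (L'+2) (s'+1) = Zplus (L'+1) (s'+1) + Fp (L'+2) (s'+1) :=
        T1 (L'+1) (s'+1)
      have hF : Fp (L'+2) (s'+1)
          = q^(L'+1-s') * (qb ((L'+1:ℕ):ℤ) (s':ℤ) - q * qb ((L'+1:ℕ):ℤ) ((s':ℤ)-1)) :=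
        (IH L' (by omega)).2 s' (by omega)
      have hZ' : Zplus (L'+1) (s'+1)
          = qb ((L'+1:ℕ):ℤ) ((s'+1:ℕ):ℤ) - qb ((L'+1:ℕ):ℤ) (((s'+1:ℕ):ℤ)-1) :=
        (IH (L'+1) (by omega)).1 (s'+1) (by omega) (by omega)
      have hcs : (((s'+1:ℕ):ℤ)-1) = ((s':ℕ):ℤ) := by push_cast; ring
      rw [hcs] at hZ'
      have p2a : qb ((L'+2:ℕ):ℤ) ((s'+1:ℕ):ℤ)
          = qb ((L'+1:ℕ):ℤ) ((s'+1:ℕ):ℤ)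
            + q^((L'+1)+1-(s'+1)) * qb ((L'+1:ℕ):ℤ) (((s'+1:ℕ):ℤ)-1) :=
        pascal2' (L'+1) (s'+1) (by omega)
      rw [hcs, show (L'+1)+1-(s'+1) = L'+1-s' from by omega] at p2a
      have p2b : qb ((L'+2:ℕ):ℤ) ((s':ℕ):ℤ)
          = qb ((L'+1:ℕ):ℤ) ((s':ℕ):ℤ)
            + q^((L'+1)+1-s') * qb ((L'+1:ℕ):ℤ) (((s':ℕ):ℤ)-1) :=
        pascal2' (L'+1) s' (by omega)
      have hcs2 : (((s'+1:ℕ):ℤ)-1) = ((s':ℕ):ℤ) := hcs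
      have hq : q^(L'+1-s') * q = q^((L'+1)+1-s') := by
        rw [← pow_succ]
        congr 1
        omega
      rw [t1, hZ', hF, show ((L'+2:ℕ):ℤ) = (((L'+1)+1:ℕ):ℤ) from rfl, hcs, p2a, p2b, ← hq]
      ring
  refine ⟨hZ, ?_⟩
  intro s hsF
  have t2 : Fp (L+2) (s+1) = Fp (L+1) s + q^(L+1) * Zplus L s := T2 L s hsF
  rcases s with _ | s'
  · rw [t2, Fp_s0, Zplus_s0]
    rw [show ((0:ℕ):ℤ) = (0:ℤ) by simp, qb_zero, qb_neg _ ((0:ℤ)-1) (by norm_num),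
      show L+1-0 = L+1 from by omega]
    ring
  · obtain ⟨L'', rfl⟩ : ∃ t, L = t+1 := ⟨L-1, by omega⟩
    have hFprev : Fp (L''+2) (s'+1)
        = q^(L''+1-s') * (qb ((L''+1:ℕ):ℤ) (s':ℤ) - q * qb ((L''+1:ℕ):ℤ) ((s':ℤ)-1)) :=
      (IH L'' (by omega)).2 s' (by omega)
    have hZL : Zplus (L''+1) (s'+1)
        = qb ((L''+1:ℕ):ℤ) ((s'+1:ℕ):ℤ) - qb ((L''+1:ℕ):ℤ) (((s'+1:ℕ):ℤ)-1) :=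
      hZ (s'+1) (by omega) (by omega)
    have hcs : (((s'+1:ℕ):ℤ)-1) = ((s':ℕ):ℤ) := by push_cast; ring
    rw [hcs] at hZL
    have pA : qb (((L''+1)+1:ℕ):ℤ) ((s'+1:ℕ):ℤ)
        = qb ((L''+1:ℕ):ℤ) (((s'+1:ℕ):ℤ)-1)
          + q^(s'+1) * qb ((L''+1:ℕ):ℤ) ((s'+1:ℕ):ℤ) :=
      pascal1' (L''+1) (s'+1)
    rw [hcs] at pA
    have pB : qb (((L''+1)+1:ℕ):ℤ) ((s':ℕ):ℤ)
        = qb ((L''+1:ℕ):ℤ) (((s':ℕ):ℤ)-1) + q^(s') * qb ((L''+1:ℕ):ℤ) ((s':ℕ):ℤ) :=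
      pascal1' (L''+1) s'
    have e1 : q^(L''+1-s') * q^(s'+1) = q^(L''+1+1) := by
      rw [← pow_add]
      congr 1
      omega
    have e3 : q^(L''+1-s') * q * q^(s') = q^(L''+1+1) := by
      rw [← pow_succ, ← pow_add]
      congr 1
      omega
    have hexp : L''+1+1-(s'+1) = L''+1-s' := by omega
    rw [t2, hFprev, hZL, hexp, pA, hcs, pB]
    linear_combination (qb ((L''+1:ℕ):ℤ) ((s':ℕ):ℤ)) * e3 - (qb ((L''+1:ℕ):ℤ) ((s'+1:ℕ):ℤ)) * e1


/-- For `0 ≤ s ≤ L/2`, `Z⁺(L,s) = [L choose s]_q − [L choose s-1]_q`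
(with the convention `[L choose -1]_q = 0`). -/
theorem Zplus_eq (L s : ℕ) (h : 2 * s ≤ L) :
    Zplus L s = qb L s - qb L ((s : ℤ) - 1) := by
  rcases Nat.eq_zero_or_pos s with rfl | hs
  · rw [Zplus_s0, show ((0:ℕ):ℤ) = (0:ℤ) by simp, qb_zero, qb_neg _ ((0:ℤ)-1) (by norm_num)]
    ring
  · exact (big L).1 s hs (by omega)
end

section
/- Let λ = (1^{m_1} ⋯ h^{m_h}) be a partition with m_h > 0 and riggings J^i = (J^i_1 ≤ ⋯ ≤ J^i_{m_i}) for each i. Define M_a recursively by M_{h+1} = (empty 2×0 matrix) and M_a = Φ_1(Ω_{J^a}(M_{a+1})), where Ω_{J^a} inserts each rigging J^a_j twice (as in the insertion map) and Φ_1 adds the matrix with rows (1,3,…,2n−1) and (2,4,…,2n) to a 2×n matrix. Then for 1 ≤ a ≤ h, the lower-right (last bottom-row) entry of M_a equals max over i ≥ a with m_i > 0 of (J^i_{m_i} + 2·∑_{k=a}^h (min(k,i)−a+1)·m_k). -/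
/-!
A matrix in `H_n` (a 2×n integer matrix whose entries read column by column, top then
bottom, are weakly increasing) is recorded by its reading sequence
`α_1 ≤ α_2 ≤ ⋯ ≤ α_{2n}`, as a sorted list of integers.
-/

/-- `Φ_1` adds `(1,3,…,2n−1)` to the top row and `(2,4,…,2n)` to the bottom row,
i.e. it adds `k` to the `k`-th entry (1-based) of the reading sequence. -/
def Phi1 (l : List ℤ) : List ℤ := l.mapIdx (fun i a => a + (i : ℤ) + 1)

/-- `Ω_X` inserts two copies of each element of the finite multiset `X` (recorded as a
list) into the sorted reading sequence. -/
def OmegaL (X : List ℤ) (l : List ℤ) : List ℤ :=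
  X.foldr (fun x m => List.orderedInsert (· ≤ ·) x (List.orderedInsert (· ≤ ·) x m)) l

/-- The recursive construction: `Mrec J h k` is the matrix `M_{h+1-k}`, where
`M_{h+1}` is the empty matrix and `M_a = Φ_1(Ω_{J^a}(M_{a+1}))`. -/
def Mrec (J : ℕ → List ℤ) (h : ℕ) : ℕ → List ℤ
  | 0 => []
  | k + 1 => Phi1 (OmegaL (J (h - k)) (Mrec J h k))

lemma Phi1_length (l : List ℤ) : (Phi1 l).length = l.length := List.length_mapIdx

lemma Phi1_getElem (l : List ℤ) (i : ℕ) (h : i < l.length)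
    (h2 : i < (Phi1 l).length) : (Phi1 l)[i] = l[i] + i + 1 := by
  have := List.getElem_mapIdx (l := l) (f := fun i a => a + (i:ℤ) + 1) (i := i) (h := h2)
  simpa [Phi1] using this

lemma Phi1_sorted {l : List ℤ} (h : l.Pairwise (· ≤ ·)) : (Phi1 l).Pairwise (· ≤ ·) := by
  rw [List.pairwise_iff_getElem] at h ⊢
  intro i j hi hj hij
  rw [Phi1_length] at hi hj
  rw [Phi1_getElem l i hi, Phi1_getElem l j hj]
  have := h i j hi hj hij
  have : (i : ℤ) ≤ j := by exact_mod_cast hij.le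
  linarith [h i j hi hj hij]

lemma Phi1_getLast? (l : List ℤ) :
    (Phi1 l).getLast? = l.getLast?.map (· + (l.length : ℤ)) := by
  rcases eq_or_ne l [] with rfl | hne
  · simp [Phi1]
  · have hl : 0 < l.length := List.length_pos_iff.2 hne
    have h1 : l.length - 1 < l.length := by omega
    have h2 : (Phi1 l).length - 1 < l.length := by rw [Phi1_length]; omega
    rw [List.getLast?_eq_getElem?, List.getLast?_eq_getElem?, Phi1_length,
      List.getElem?_eq_getElem (by rw [Phi1_length]; omega), List.getElem?_eq_getElem h1,
      Phi1_getElem l _ h1]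
    simp only [Option.map_some]
    congr 1
    have : ((l.length - 1 : ℕ) : ℤ) = (l.length : ℤ) - 1 := by
      exact_mod_cast Nat.cast_sub hl
    rw [this]; ring

lemma sorted_head_le {a : ℤ} {l : List ℤ} (h : (a :: l).Pairwise (· ≤ ·))
    {b : ℤ} (hb : b ∈ a :: l) : a ≤ b := by
  rcases List.mem_cons.1 hb with rfl | hb
  · exact le_refl _
  · exact (List.pairwise_cons.1 h).1 b hb

lemma last_orderedInsert {x : ℤ} {l : List ℤ} (h : l.Pairwise (· ≤ ·)) :
    (List.orderedInsert (· ≤ ·) x l).getLast? = some (max x (l.getLast?.getD x)) := by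
  induction l with
  | nil => simp [List.orderedInsert]
  | cons a l ih =>
    by_cases hxa : x ≤ a
    · rw [List.orderedInsert_cons_of_le _ _ hxa, List.getLast?_cons_cons]
      have hne : a :: l ≠ [] := List.cons_ne_nil _ _
      rw [List.getLast?_eq_getLast_of_ne_nil hne]
      have hxb : x ≤ (a :: l).getLast hne :=
        le_trans hxa (sorted_head_le h (List.getLast_mem hne))
      simp [max_eq_right hxb]
    · have hord : List.orderedInsert (· ≤ ·) x (a :: l)
          = a :: List.orderedInsert (· ≤ ·) x l := by
        simp [List.orderedInsert, hxa]
      rw [hord]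
      cases l with
      | nil =>
        simp only [List.orderedInsert]
        have : a ≤ x := le_of_not_ge hxa
        simp [max_eq_left this]
      | cons b l' =>
        have hne2 : List.orderedInsert (· ≤ ·) x (b :: l') ≠ [] := by
          intro hh
          have hlen2 := List.orderedInsert_length (α := ℤ) (· ≤ ·) (b :: l') x
          rw [hh] at hlen2
          simp at hlen2
        obtain ⟨c, t, hct⟩ := List.exists_cons_of_ne_nil hne2
        rw [hct, List.getLast?_cons_cons, ← hct, ih (List.pairwise_cons.1 h).2,
          List.getLast?_cons_cons]

lemma last_orderedInsert2 {x : ℤ} {l : List ℤ} (h : l.Pairwise (· ≤ ·)) :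
    (List.orderedInsert (· ≤ ·) x (List.orderedInsert (· ≤ ·) x l)).getLast?
      = some (max x (l.getLast?.getD x)) := by
  rw [last_orderedInsert (h.orderedInsert x l), last_orderedInsert h]
  simp [← max_assoc]

lemma OmegaL_nil (l : List ℤ) : OmegaL [] l = l := rfl

lemma OmegaL_cons (x : ℤ) (X l : List ℤ) : OmegaL (x :: X) l
    = List.orderedInsert (· ≤ ·) x (List.orderedInsert (· ≤ ·) x (OmegaL X l)) := rfl

lemma OmegaL_sorted {X l : List ℤ} (h : l.Pairwise (· ≤ ·)) :
    (OmegaL X l).Pairwise (· ≤ ·) := by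
  induction X with
  | nil => exact h
  | cons x X ih => exact ((ih).orderedInsert x _).orderedInsert x _

lemma OmegaL_length (X l : List ℤ) : (OmegaL X l).length = 2 * X.length + l.length := by
  induction X with
  | nil => simp [OmegaL]
  | cons x X ih =>
    rw [OmegaL_cons, List.orderedInsert_length, List.orderedInsert_length, ih]
    simp; ring

lemma last_OmegaL {X l : List ℤ} (hX : X ≠ []) (hXs : X.Pairwise (· ≤ ·))
    (hl : l.Pairwise (· ≤ ·)) :
    (OmegaL X l).getLast?
      = some (max (X.getLast hX) (l.getLast?.getD (X.getLast hX))) := by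
  induction X with
  | nil => exact absurd rfl hX
  | cons x X ih =>
    cases X with
    | nil =>
      rw [OmegaL_cons, OmegaL_nil, last_orderedInsert2 hl]
      simp
    | cons y X' =>
      have hX' : y :: X' ≠ [] := List.cons_ne_nil _ _
      rw [OmegaL_cons, last_orderedInsert2 (OmegaL_sorted hl), ih hX' (List.pairwise_cons.1 hXs).2]
      have hxb : x ≤ (y :: X').getLast hX' :=
        (List.pairwise_cons.1 hXs).1 _ (List.getLast_mem hX')
      rw [List.getLast_cons hX']
      simp only [Option.getD_some]
      congr 1
      exact max_eq_right (le_trans hxb (le_max_left _ _))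

lemma Mrec_sorted (J : ℕ → List ℤ) (h k : ℕ) : (Mrec J h k).Pairwise (· ≤ ·) := by
  induction k with
  | zero => simp [Mrec]
  | succ k ih => exact Phi1_sorted (OmegaL_sorted ih)

lemma Icc_eq_insert {a h : ℕ} (hah : a ≤ h) :
    Finset.Icc a h = insert a (Finset.Icc (a + 1) h) := by
  rw [Finset.Icc_add_one_left_eq_Ioc, Finset.Ioc_insert_left hah]

lemma sum_Icc_bot {M : Type*} [AddCommMonoid M] (f : ℕ → M) {a h : ℕ} (hah : a ≤ h) :
    ∑ k ∈ Finset.Icc a h, f k = f a + ∑ k ∈ Finset.Icc (a + 1) h, f k := by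
  rw [Icc_eq_insert hah, Finset.sum_insert (by simp)]

lemma Mrec_succ (J : ℕ → List ℤ) (h k : ℕ) :
    Mrec J h (k + 1) = Phi1 (OmegaL (J (h - k)) (Mrec J h k)) := rfl

lemma Mrec_length (J : ℕ → List ℤ) (h : ℕ) (m : ℕ → ℕ) (hlen : ∀ i, (J i).length = m i) :
    ∀ d, d ≤ h → (Mrec J h (d + 1)).length = 2 * ∑ k ∈ Finset.Icc (h - d) h, m k := by
  intro d
  induction d with
  | zero =>
    intro _
    rw [Mrec_succ, Phi1_length, OmegaL_length, hlen]
    simp [Mrec]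
  | succ d ih =>
    intro hd
    rw [Mrec_succ, Phi1_length, OmegaL_length, ih (by omega), hlen]
    have h1 : h - (d + 1) ≤ h := by omega
    have h2 : h - (d + 1) + 1 = h - d := by omega
    rw [sum_Icc_bot m h1, h2]
    ring

lemma main_aux (h : ℕ) (m : ℕ → ℕ) (J : ℕ → List ℤ)
    (hlen : ∀ i, (J i).length = m i) (hsort : ∀ i, (J i).Pairwise (· ≤ ·))
    (hmh : m h ≠ 0) :
    ∀ d a, a = h - d → 1 ≤ a →
    ∀ (H : ((Finset.Icc a h).filter (fun i => m i ≠ 0)).Nonempty),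
    (Mrec J h (h + 1 - a)).getLast? =
      some (((Finset.Icc a h).filter (fun i => m i ≠ 0)).sup' H
        (fun i => (J i).getLast?.getD 0 +
          2 * ∑ k ∈ Finset.Icc a h, ((min k i : ℤ) - (a : ℤ) + 1) * (m k : ℤ))) := by
  intro d
  induction d with
  | zero =>
    intro a ha ha1 H
    have hah : a = h := by omega
    subst hah
    have hJne : J a ≠ [] := by
      intro hJ; apply hmh; rw [← hlen a, hJ]; rfl
    have h1 : a + 1 - a = 1 := by omega
    rw [h1, Mrec_succ]
    have h2 : a - 0 = a := by omega
    rw [h2]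
    have hM0 : Mrec J a 0 = [] := rfl
    rw [hM0, Phi1_getLast?, last_OmegaL hJne (hsort a) (by simp)]
    have hset : (Finset.Icc a a).filter (fun i => m i ≠ 0) = {a} := by
      rw [Finset.Icc_self, Finset.filter_singleton, if_pos hmh]
    rw [Finset.sup'_congr H hset (fun x _ => rfl), Finset.sup'_singleton]
    simp only [List.getLast?_eq_getLast_of_ne_nil hJne, Option.getD_some,
      List.getLast?_nil, Option.getD_none, Option.map_some, max_self, OmegaL_length,
      List.length_nil, Finset.Icc_self, Finset.sum_singleton]
    congr 1
    rw [hlen a, min_self]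
    push_cast
    ring
  | succ d ih =>
    intro a ha ha1 H
    set b := a + 1 with hb
    have hdh : d + 1 ≤ h - 1 := by omega
    have hah : a ≤ h := by omega
    have hah' : a < h := by omega
    have hbh : b ≤ h := by omega
    have hbd : b = h - d := by omega
    have hha : h - (d + 1) = a := by omega
    have h2 : h + 1 - a = d + 2 := by omega
    have h3 : h + 1 - b = d + 1 := by omega
    have H' : ((Finset.Icc b h).filter (fun i => m i ≠ 0)).Nonempty :=
      ⟨h, Finset.mem_filter.2 ⟨Finset.mem_Icc.2 ⟨hbh, le_refl h⟩, hmh⟩⟩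
    have IH := ih b hbd (by omega) H'
    rw [h3] at IH
    -- abbreviations
    set Nb : ℤ := ∑ k ∈ Finset.Icc b h, (m k : ℤ) with hNb
    have hNa : ∑ k ∈ Finset.Icc a h, (m k : ℤ) = (m a : ℤ) + Nb := by
      rw [sum_Icc_bot (fun k => (m k : ℤ)) hah]
    set Fb : ℤ := ((Finset.Icc b h).filter (fun i => m i ≠ 0)).sup' H'
        (fun i => (J i).getLast?.getD 0 +
          2 * ∑ k ∈ Finset.Icc b h, ((min k i : ℤ) - (b : ℤ) + 1) * (m k : ℤ)) with hFb
    -- key sum identity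
    have key : ∀ i : ℕ, b ≤ i →
        (∑ k ∈ Finset.Icc a h, ((min k i : ℤ) - (a : ℤ) + 1) * (m k : ℤ))
          = (∑ k ∈ Finset.Icc b h, ((min k i : ℤ) - (b : ℤ) + 1) * (m k : ℤ))
            + ((m a : ℤ) + Nb) := by
      intro i hi
      rw [sum_Icc_bot (fun k => ((min k i : ℤ) - (a : ℤ) + 1) * (m k : ℤ)) hah]
      have hmin : min (a : ℤ) (i : ℤ) = (a : ℤ) :=
        min_eq_left (by exact_mod_cast (Nat.le_of_succ_le hi))
      rw [hmin]
      have hb' : (b : ℤ) = (a : ℤ) + 1 := by rw [hb]; push_cast; ring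
      have hterm : ∀ k ∈ Finset.Icc b h,
          ((min k i : ℤ) - (a : ℤ) + 1) * (m k : ℤ)
            = ((min k i : ℤ) - (b : ℤ) + 1) * (m k : ℤ) + (m k : ℤ) := by
        intro k _
        rw [hb']; ring
      rw [Finset.sum_congr rfl hterm, Finset.sum_add_distrib, ← hNb]
      ring
    -- length computation
    have hlenM : ((OmegaL (J a) (Mrec J h (d + 1))).length : ℤ)
        = 2 * ((m a : ℤ) + Nb) := by
      rw [OmegaL_length, hlen a, Mrec_length J h m hlen d (by omega), ← hbd]
      push_cast [hNb]
      ring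
    -- the sup' over Icc b h of the a-shifted function
    have hshift : ((Finset.Icc b h).filter (fun i => m i ≠ 0)).sup' H'
        (fun i => (J i).getLast?.getD 0 +
          2 * ∑ k ∈ Finset.Icc a h, ((min k i : ℤ) - (a : ℤ) + 1) * (m k : ℤ))
        = Fb + 2 * ((m a : ℤ) + Nb) := by
      have hcomp : Fb + 2 * ((m a : ℤ) + Nb)
          = ((Finset.Icc b h).filter (fun i => m i ≠ 0)).sup' H'
            (fun i => ((J i).getLast?.getD 0 +
              2 * ∑ k ∈ Finset.Icc b h, ((min k i : ℤ) - (b : ℤ) + 1) * (m k : ℤ))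
              + 2 * ((m a : ℤ) + Nb)) := by
        rw [hFb]
        exact Finset.comp_sup'_eq_sup'_comp H' (fun x => x + 2 * ((m a : ℤ) + Nb))
          (fun x y => (max_add_add_right x y _).symm)
      rw [hcomp]
      apply Finset.sup'_congr H' rfl
      intro i hi
      have hib : b ≤ i := (Finset.mem_Icc.1 (Finset.mem_filter.1 hi).1).1
      rw [key i hib]
      ring
    rw [h2, Mrec_succ, hha, Phi1_getLast?]
    by_cases hma : m a = 0
    · -- J a is empty
      have hJ : J a = [] := List.length_eq_zero_iff.1 (by rw [hlen a, hma])
      rw [hJ, OmegaL_nil, IH, Option.map_some]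
      have hset : (Finset.Icc a h).filter (fun i => m i ≠ 0)
          = (Finset.Icc b h).filter (fun i => m i ≠ 0) := by
        rw [Icc_eq_insert hah, Finset.filter_insert, if_neg (by simpa using hma)]
      rw [Finset.sup'_congr H hset (fun x _ => rfl), hshift]
      congr 1
      rw [hJ] at hlenM
      rw [OmegaL_nil] at hlenM
      rw [hlenM]
    · have hJne : J a ≠ [] := by
        intro hJ; apply hma; rw [← hlen a, hJ]; rfl
      rw [last_OmegaL hJne (hsort a) (Mrec_sorted J h (d + 1)), IH]
      simp only [Option.getD_some, Option.map_some]
      have hset : (Finset.Icc a h).filter (fun i => m i ≠ 0)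
          = insert a ((Finset.Icc b h).filter (fun i => m i ≠ 0)) := by
        rw [Icc_eq_insert hah, Finset.filter_insert, if_pos hma]
      rw [Finset.sup'_congr H hset (fun x _ => rfl), Finset.sup'_insert H', hshift]
      have hSaa : ∑ k ∈ Finset.Icc a h, ((min k a : ℤ) - (a : ℤ) + 1) * (m k : ℤ)
          = (m a : ℤ) + Nb := by
        rw [← hNa]
        apply Finset.sum_congr rfl
        intro k hk
        have hak : a ≤ k := (Finset.mem_Icc.1 hk).1
        have : min (k : ℤ) (a : ℤ) = (a : ℤ) := min_eq_right (by exact_mod_cast hak)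
        rw [this]; ring
      rw [hSaa, hlenM]
      rw [List.getLast?_eq_getLast_of_ne_nil hJne, Option.getD_some]
      rw [← max_add_add_right]

/-- Lower-right entry of `M_a`: for a partition `λ = (1^{m_1} ⋯ h^{m_h})` with `m_h > 0`
and weakly increasing riggings `J^i` of lengths `m_i`, for `1 ≤ a ≤ h`, the last entry of
`M_a` (the lower-right matrix entry) equals
`max_{i ≥ a, m_i > 0} (J^i_{m_i} + 2·∑_{k=a}^h (min(k,i)−a+1)·m_k)`. -/
theorem lowerRight_Mrec (h : ℕ) (m : ℕ → ℕ) (J : ℕ → List ℤ)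
    (hlen : ∀ i, (J i).length = m i) (hsort : ∀ i, (J i).Pairwise (· ≤ ·))
    (hmh : m h ≠ 0) (a : ℕ) (ha1 : 1 ≤ a) (hah : a ≤ h) :
    (Mrec J h (h + 1 - a)).getLast? =
      some (((Finset.Icc a h).filter (fun i => m i ≠ 0)).sup'
        ⟨h, Finset.mem_filter.2 ⟨Finset.mem_Icc.2 ⟨hah, le_refl h⟩, hmh⟩⟩
        (fun i => (J i).getLast?.getD 0 +
          2 * ∑ k ∈ Finset.Icc a h, ((min k i : ℤ) - (a : ℤ) + 1) * (m k : ℤ))) :=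
  main_aux h m J hlen hsort hmh (h - a) a (by omega) ha1 _
end

section
/- With the same recursive construction M_a = Φ_1(Ω_{J^a}(M_{a+1})), M_{h+1} empty, the upper-left (first top-row) entry of M_a equals min over i ≥ a with m_i > 0 of (J^i_1 + i − a + 1), for 1 ≤ a ≤ h. -/
lemma head?_orderedInsert (x : ℤ) (m : List ℤ) :
    (List.orderedInsert (· ≤ ·) x m).head? = some (min x (m.head?.getD x)) := by
  cases m with
  | nil => simp [List.orderedInsert]
  | cons y t =>
    by_cases hxy : x ≤ y
    · simp [List.orderedInsert, hxy, min_eq_left hxy]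
    · have hyx : y ≤ x := le_of_not_ge hxy
      simp [List.orderedInsert, hxy, min_eq_right hyx]

lemma head?_OmegaL (l : List ℤ) : ∀ (X : List ℤ), X.Pairwise (· ≤ ·) →
    (OmegaL X l).head? =
      (match X with
      | [] => l.head?
      | x :: _ => some (min x (l.head?.getD x))) := by
  intro X
  induction X with
  | nil => intro _; rfl
  | cons x X ih =>
    intro hs
    have hstep : (OmegaL (x :: X) l).head? = some (min x ((OmegaL X l).head?.getD x)) := by
      show (List.orderedInsert _ x (List.orderedInsert _ x (OmegaL X l))).head? = _
      rw [head?_orderedInsert, head?_orderedInsert]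
      simp [← min_assoc]
    rw [hstep, ih hs.of_cons]
    cases X with
    | nil => cases l <;> simp
    | cons y Y =>
      have hxy : x ≤ y := (List.pairwise_cons.1 hs).1 y (by simp)
      cases l with
      | nil => simp [min_eq_left hxy, ← min_assoc]
      | cons z zs => simp [← min_assoc, min_eq_left hxy]

lemma head?_Phi1 (l : List ℤ) : (Phi1 l).head? = l.head?.map (· + 1) := by
  cases l <;> simp [Phi1]

lemma aux_main (h : ℕ) (m : ℕ → ℕ) (J : ℕ → List ℤ)
    (hlen : ∀ i, (J i).length = m i) (hsort : ∀ i, (J i).Pairwise (· ≤ ·))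
    (hmh : m h ≠ 0) :
    ∀ d a, a + d = h → 1 ≤ a →
    ∀ H : (((Finset.Icc a h).filter (fun i => m i ≠ 0)).Nonempty),
    (Mrec J h (h + 1 - a)).head? =
      some (((Finset.Icc a h).filter (fun i => m i ≠ 0)).inf' H
        (fun i => (J i).head?.getD 0 + (i : ℤ) - (a : ℤ) + 1)) := by
  intro d
  induction d with
  | zero =>
    intro a hd ha1 H
    have hahh : a = h := by omega
    subst hahh
    have h1 : a + 1 - a = 1 := by omega
    rw [h1]
    have hJ : J a ≠ [] := by
      intro e
      apply hmh
      rw [← hlen a, e]; rfl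
    obtain ⟨x, t, hx⟩ := List.exists_cons_of_ne_nil hJ
    have : (Mrec J a 1).head? = some (x + 1) := by
      show (Phi1 (OmegaL (J (a - 0)) (Mrec J a 0))).head? = _
      rw [Nat.sub_zero, head?_Phi1]
      have := head?_OmegaL ([] : List ℤ) (J a) (hsort a)
      rw [hx] at this ⊢
      simp only [Mrec] at *
      rw [this]
      simp
    rw [this]
    congr 1
    have hT : (Finset.Icc a a).filter (fun i => m i ≠ 0) = {a} := by
      rw [Finset.Icc_self, Finset.filter_singleton, if_pos hmh]
    rw [Finset.inf'_congr H hT (fun i _ => rfl), Finset.inf'_singleton, hx]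
    simp only [List.head?_cons, Option.getD_some]
    ring
  | succ d ih =>
    intro a hd ha1 H
    have hah : a < h := by omega
    have H' : ((Finset.Icc (a + 1) h).filter (fun i => m i ≠ 0)).Nonempty :=
      ⟨h, Finset.mem_filter.2 ⟨Finset.mem_Icc.2 ⟨by omega, le_refl h⟩, hmh⟩⟩
    have IH := ih (a + 1) (by omega) (by omega) H'
    have h4 : h + 1 - (a + 1) = d + 1 := by omega
    rw [h4] at IH
    set S : ℤ := ((Finset.Icc (a+1) h).filter (fun i => m i ≠ 0)).inf' H'
      (fun i => (J i).head?.getD 0 + (i : ℤ) - ((a : ℤ) + 1) + 1) with hS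
    have hScast : ((Finset.Icc (a+1) h).filter (fun i => m i ≠ 0)).inf' H'
        (fun i => (J i).head?.getD 0 + (i : ℤ) - (((a+1 : ℕ)) : ℤ) + 1) = S :=
      Finset.inf'_congr H' rfl (fun i _ => by push_cast; ring)
    rw [hScast] at IH
    have h2 : h + 1 - a = (d + 1) + 1 := by omega
    rw [h2]
    have ha : h - (d + 1) = a := by omega
    show (Phi1 (OmegaL (J (h - (d+1))) (Mrec J h (d+1)))).head? = _
    rw [ha, head?_Phi1]
    -- shift lemma
    have hshift : ((Finset.Icc (a+1) h).filter (fun i => m i ≠ 0)).inf' H'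
        (fun i => (J i).head?.getD 0 + (i : ℤ) - (a : ℤ) + 1) = S + 1 := by
      have hfun : (fun i => (J i).head?.getD 0 + (i : ℤ) - (a : ℤ) + 1)
          = (fun z => z + 1) ∘ (fun i => (J i).head?.getD 0 + (i : ℤ) - ((a : ℤ) + 1) + 1) := by
        funext i; simp [Function.comp]; ring
      rw [hfun, ← Finset.apply_inf'_eq_inf'_comp H' (fun z => z + 1)
        (fun x y => by simp [min_add_add_right])]
    have hIcc : Finset.Icc a h = insert a (Finset.Icc (a+1) h) := by
      ext i; simp [Finset.mem_Icc, Finset.mem_insert]; omega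
    by_cases hma : m a = 0
    · have hJa : J a = [] := List.eq_nil_of_length_eq_zero (by rw [hlen a]; exact hma)
      have hO : OmegaL (J a) (Mrec J h (d+1)) = Mrec J h (d+1) := by rw [hJa]; rfl
      rw [hO, IH]
      have hT : (Finset.Icc a h).filter (fun i => m i ≠ 0)
          = (Finset.Icc (a+1) h).filter (fun i => m i ≠ 0) := by
        rw [hIcc, Finset.filter_insert, if_neg (by simp [hma])]
      simp only [Option.map_some]
      congr 1
      rw [Finset.inf'_congr H (hT) (fun i _ => rfl), hshift]
    · have hJ : J a ≠ [] := by
        intro e; apply hma; rw [← hlen a, e]; rfl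
      obtain ⟨x, t, hx⟩ := List.exists_cons_of_ne_nil hJ
      have hO := head?_OmegaL (Mrec J h (d+1)) (J a) (hsort a)
      rw [hx] at hO
      rw [hx, hO, IH]
      simp only [Option.getD_some, Option.map_some]
      have hT : (Finset.Icc a h).filter (fun i => m i ≠ 0)
          = insert a ((Finset.Icc (a+1) h).filter (fun i => m i ≠ 0)) := by
        rw [hIcc, Finset.filter_insert, if_pos hma]
      congr 1
      rw [Finset.inf'_congr H (hT) (fun i _ => rfl), Finset.inf'_insert, hshift, hx]
      simp only [List.head?_cons, Option.getD_some]
      have h5 : (x : ℤ) + (a : ℤ) - (a : ℤ) + 1 = x + 1 := by ring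
      rw [h5]
      omega
      exact H'


/-- Upper-left entry of `M_a`: for a partition `λ = (1^{m_1} ⋯ h^{m_h})` with `m_h > 0`
and weakly increasing riggings `J^i` of lengths `m_i`, for `1 ≤ a ≤ h`, the first entry
of `M_a` (the upper-left matrix entry) equals `min_{i ≥ a, m_i > 0} (J^i_1 + i − a + 1)`. -/
theorem upperLeft_Mrec (h : ℕ) (m : ℕ → ℕ) (J : ℕ → List ℤ)
    (hlen : ∀ i, (J i).length = m i) (hsort : ∀ i, (J i).Pairwise (· ≤ ·))
    (hmh : m h ≠ 0) (a : ℕ) (ha1 : 1 ≤ a) (hah : a ≤ h) :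
    (Mrec J h (h + 1 - a)).head? =
      some (((Finset.Icc a h).filter (fun i => m i ≠ 0)).inf'
        ⟨h, Finset.mem_filter.2 ⟨Finset.mem_Icc.2 ⟨hah, le_refl h⟩, hmh⟩⟩
        (fun i => (J i).head?.getD 0 + (i : ℤ) - (a : ℤ) + 1)) := by
  exact aux_main h m J hlen hsort hmh (h - a) a (by omega) ha1 _
end
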